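/- arXiv:2604.21195 — 6 statements merged into one kernel-verified Lean document; each statement's English description precedes it below -/
import Mathlib

section
/- Let p be an odd prime, let λ ≥ 0 be an integer, and let A, B be integers. Then the number of units a ∈ (ℤ/p^λℤ)ˣ satisfying a²·A ≡ B (mod p^λ) is at most 2·gcd(A, B, p^λ). -/
lemma units_sq_eq_one (p : ℕ) (hp : p.Prime) (hodd : Odd p) (m : ℕ)
    (t : (ZMod (p ^ m))ˣ) (ht : t ^ 2 = 1) : t = 1 ∨ t = -1 := by
  haveI : NeZero (p ^ m) := ⟨pow_ne_zero _ hp.ne_zero⟩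
  set z : ℤ := ((t : ZMod (p ^ m)).val : ℤ) with hzdef
  have hz : ((z : ℤ) : ZMod (p ^ m)) = (t : ZMod (p ^ m)) := by
    rw [hzdef]; push_cast [ZMod.natCast_val, ZMod.cast_id]; rfl
  have ht' : ((t : ZMod (p ^ m))) ^ 2 = 1 := by
    have := congrArg (Units.val) ht; push_cast at this; exact_mod_cast this
  have hdvd : ((p : ℤ) ^ m) ∣ (z - 1) * (z + 1) := by
    have h0 : ((z ^ 2 - 1 : ℤ) : ZMod (p ^ m)) = 0 := by push_cast [hz, ht']; ring
    have := (ZMod.intCast_zmod_eq_zero_iff_dvd _ (p ^ m)).mp h0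
    have h2 : (z - 1) * (z + 1) = z ^ 2 - 1 := by ring
    rw [h2]; exact_mod_cast this
  have hprime : Prime (p : ℤ) := Nat.prime_iff_prime_int.mp hp
  have hnb : ¬ ((p : ℤ) ∣ z - 1 ∧ (p : ℤ) ∣ z + 1) := by
    rintro ⟨h1, h2⟩
    have h3 : (p : ℤ) ∣ 2 := by
      have := dvd_sub h2 h1; simpa using this
    have h4 : p ∣ 2 := by exact_mod_cast h3
    have h5 := Nat.le_of_dvd (by norm_num) h4
    have h6 := hp.two_le
    have h7 := Nat.odd_iff.mp hodd
    omega
  by_cases h1 : (p : ℤ) ∣ z + 1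
  · right
    have h2 : ¬ (p : ℤ) ∣ z - 1 := fun h => hnb ⟨h, h1⟩
    have hc : IsCoprime ((p : ℤ) ^ m) (z - 1) :=
      (hprime.coprime_iff_not_dvd.mpr h2).pow_left
    have h3 : ((p : ℤ) ^ m) ∣ z + 1 := hc.dvd_of_dvd_mul_left hdvd
    have h4 : ((z + 1 : ℤ) : ZMod (p ^ m)) = 0 := by
      rw [ZMod.intCast_zmod_eq_zero_iff_dvd]; exact_mod_cast h3
    ext
    push_cast at h4
    have : (t : ZMod (p ^ m)) = -1 := by rw [← hz]; linear_combination h4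
    simpa using this
  · left
    have hc : IsCoprime ((p : ℤ) ^ m) (z + 1) :=
      (hprime.coprime_iff_not_dvd.mpr h1).pow_left
    have h3 : ((p : ℤ) ^ m) ∣ z - 1 := hc.dvd_of_dvd_mul_right hdvd
    have h4 : ((z - 1 : ℤ) : ZMod (p ^ m)) = 0 := by
      rw [ZMod.intCast_zmod_eq_zero_iff_dvd]; exact_mod_cast h3
    ext
    push_cast at h4
    have : (t : ZMod (p ^ m)) = 1 := by rw [← hz]; linear_combination h4
    simpa using this

lemma card_ker_unitsMap (p : ℕ) (hp : p.Prime) (lam k : ℕ) (hk : 0 < k) (hkl : k ≤ lam) :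
    Nat.card (ZMod.unitsMap (pow_dvd_pow p hkl)).ker = p ^ (lam - k) := by
  haveI : NeZero (p ^ lam) := ⟨pow_ne_zero _ hp.ne_zero⟩
  haveI : NeZero (p ^ k) := ⟨pow_ne_zero _ hp.ne_zero⟩
  set f := ZMod.unitsMap (pow_dvd_pow p hkl) with hfdef
  have hsurj : Function.Surjective f := ZMod.unitsMap_surjective _
  have h1 : Nat.card (ZMod (p ^ lam))ˣ = Nat.card (ZMod (p ^ k))ˣ * Nat.card f.ker := by
    rw [Subgroup.card_eq_card_quotient_mul_card_subgroup f.ker]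
    congr 1
    exact Nat.card_congr (QuotientGroup.quotientKerEquivOfSurjective f hsurj).toEquiv
  have hu : ∀ j, 0 < j → Nat.card (ZMod (p ^ j))ˣ = p ^ (j - 1) * (p - 1) := by
    intro j hj
    haveI : NeZero (p ^ j) := ⟨pow_ne_zero _ hp.ne_zero⟩
    rw [Nat.card_eq_fintype_card, ZMod.card_units_eq_totient, Nat.totient_prime_pow hp hj]
  rw [hu lam (lt_of_lt_of_le hk hkl), hu k hk] at h1
  have hpos : 0 < p ^ (k - 1) * (p - 1) := by
    have := hp.two_le
    exact Nat.mul_pos (Nat.pow_pos hp.pos) (by omega)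
  apply Nat.eq_of_mul_eq_mul_left hpos
  rw [← h1, mul_right_comm, ← pow_add]
  congr 2
  omega

/-- For an odd prime `p`, an integer `λ ≥ 0` and integers `A`, `B`,
the number of units `a ∈ (ℤ/p^λℤ)ˣ` with `a²·A ≡ B (mod p^λ)` is at most
`2 · gcd(A, B, p^λ)`. -/
theorem count_units_square_congruence
    (p : ℕ) (hp : p.Prime) (hodd : Odd p) (lam : ℕ) (A B : ℤ) :
    Nat.card {a : (ZMod (p ^ lam))ˣ //
        ((a : ZMod (p ^ lam)) ^ 2) * (A : ZMod (p ^ lam)) = (B : ZMod (p ^ lam))}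
      ≤ 2 * Int.gcd A (Int.gcd B ((p : ℤ) ^ lam)) := by
  haveI hpF : Fact p.Prime := ⟨hp⟩
  haveI : NeZero (p ^ lam) := ⟨pow_ne_zero _ hp.ne_zero⟩
  set S := {a : (ZMod (p ^ lam))ˣ //
      ((a : ZMod (p ^ lam)) ^ 2) * (A : ZMod (p ^ lam)) = (B : ZMod (p ^ lam))} with hSdef
  rcases isEmpty_or_nonempty S with hE | hNE
  · rw [Nat.card_of_isEmpty]; exact Nat.zero_le _
  obtain ⟨⟨a₀, ha₀⟩⟩ := hNE
  set y : ℤ := (((a₀ : ZMod (p ^ lam))).val : ℤ) with hydef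
  have hkey : ∀ (a : (ZMod (p ^ lam))ˣ),
      ((a : ZMod (p ^ lam)) ^ 2) * (A : ZMod (p ^ lam)) = (B : ZMod (p ^ lam)) →
      (p : ℤ) ^ lam ∣ (((a : ZMod (p ^ lam)).val : ℤ)) ^ 2 * A - B := by
    intro a ha
    have hxc : (((((a : ZMod (p ^ lam)).val : ℤ)) : ℤ) : ZMod (p ^ lam)) = (a : ZMod (p ^ lam)) := by
      push_cast [ZMod.natCast_val, ZMod.cast_id]; rfl
    have h0 : (((((a : ZMod (p ^ lam)).val : ℤ)) ^ 2 * A - B : ℤ) : ZMod (p ^ lam)) = 0 := by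
      push_cast [hxc]
      rw [ha]; ring
    have := (ZMod.intCast_zmod_eq_zero_iff_dvd _ _).mp h0
    exact_mod_cast this
  have hy2 : (p : ℤ) ^ lam ∣ y ^ 2 * A - B := hkey a₀ ha₀
  by_cases hdvd : (p : ℤ) ^ lam ∣ A
  · -- degenerate case: p^lam ∣ A, so also p^lam ∣ B and gcd = p^lam
    have hB : (p : ℤ) ^ lam ∣ B := by
      have h1 : (p : ℤ) ^ lam ∣ y ^ 2 * A := Dvd.dvd.mul_left hdvd _
      have := dvd_sub h1 hy2
      simpa using this
    have hd : Int.gcd A (Int.gcd B ((p : ℤ) ^ lam)) = p ^ lam := by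
      apply Nat.dvd_antisymm
      · have h1 : (Int.gcd A (Int.gcd B ((p : ℤ) ^ lam)) : ℤ) ∣ ((p ^ lam : ℕ) : ℤ) := by
          push_cast
          exact (Int.gcd_dvd_right _ _).trans (Int.gcd_dvd_right _ _)
        exact_mod_cast h1
      · have h1 : ((p ^ lam : ℕ) : ℤ) ∣ (Int.gcd A (Int.gcd B ((p : ℤ) ^ lam)) : ℤ) := by
          push_cast
          exact Int.dvd_coe_gcd hdvd (Int.dvd_coe_gcd hB dvd_rfl)
        exact_mod_cast h1
    rw [hd]
    have h2 : Nat.card S ≤ Nat.card (ZMod (p ^ lam))ˣ :=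
      Nat.card_le_card_of_injective _ Subtype.val_injective
    have h3 : Nat.card (ZMod (p ^ lam))ˣ = (p ^ lam).totient := by
      rw [Nat.card_eq_fintype_card, ZMod.card_units_eq_totient]
    have h4 := Nat.totient_le (p ^ lam)
    omega
  · have hA0 : A ≠ 0 := by rintro rfl; exact hdvd (dvd_zero _)
    set α := padicValInt p A with hαdef
    have hαlam : α < lam := by
      by_contra h
      push_neg at h
      exact hdvd ((padicValInt_dvd_iff _ _).mpr (Or.inr h))
    have hpowA : (p : ℤ) ^ α ∣ A := padicValInt_dvd A
    have hB : (p : ℤ) ^ α ∣ B := by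
      have h1 : (p : ℤ) ^ α ∣ y ^ 2 * A := Dvd.dvd.mul_left hpowA _
      have h2 : (p : ℤ) ^ α ∣ y ^ 2 * A - B := dvd_trans (pow_dvd_pow _ hαlam.le) hy2
      have := dvd_sub h1 h2
      simpa using this
    have hdge : p ^ α ≤ Int.gcd A (Int.gcd B ((p : ℤ) ^ lam)) := by
      have h1 : ((p ^ α : ℕ) : ℤ) ∣ (Int.gcd A (Int.gcd B ((p : ℤ) ^ lam)) : ℤ) := by
        push_cast
        exact Int.dvd_coe_gcd hpowA (Int.dvd_coe_gcd hB (pow_dvd_pow _ hαlam.le))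
      have h2 : Int.gcd A (Int.gcd B ((p : ℤ) ^ lam)) ≠ 0 := by
        intro h
        rw [Int.gcd_eq_zero_iff] at h
        exact hA0 h.1
      exact_mod_cast Int.le_of_dvd (by exact_mod_cast Nat.pos_of_ne_zero h2) h1
    have hmain : Nat.card S ≤ 2 * p ^ α := by
      set k := lam - α with hkdef
      have hk0 : 0 < k := by omega
      have hkl : k ≤ lam := by omega
      haveI : NeZero (p ^ k) := ⟨pow_ne_zero _ hp.ne_zero⟩
      set f := ZMod.unitsMap (pow_dvd_pow p hkl) with hfdef
      have hsurj : Function.Surjective f := ZMod.unitsMap_surjective _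
      have hcast : ∀ b : (ZMod (p ^ lam))ˣ,
          ((f b : ZMod (p ^ k))) = ((((b : ZMod (p ^ lam)).val : ℤ)) : ZMod (p ^ k)) := by
        intro b
        have h1 : (f b : ZMod (p ^ k)) =
            ZMod.castHom (pow_dvd_pow p hkl) (ZMod (p ^ k)) (b : ZMod (p ^ lam)) := rfl
        rw [h1, ZMod.castHom_apply, Int.cast_natCast, ZMod.natCast_val]
      have hsq : ∀ (a : (ZMod (p ^ lam))ˣ),
          ((a : ZMod (p ^ lam)) ^ 2) * (A : ZMod (p ^ lam)) = (B : ZMod (p ^ lam)) →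
          f a ^ 2 = f a₀ ^ 2 := by
        intro a ha
        set x : ℤ := ((a : ZMod (p ^ lam)).val : ℤ) with hxdef
        have hx2 := hkey a ha
        have hCA : (p : ℤ) ^ lam ∣ (x ^ 2 - y ^ 2) * A := by
          have h := dvd_sub hx2 hy2
          have he : (x ^ 2 * A - B) - (y ^ 2 * A - B) = (x ^ 2 - y ^ 2) * A := by ring
          rwa [he] at h
        have hC : (p : ℤ) ^ k ∣ x ^ 2 - y ^ 2 := by
          rcases eq_or_ne (x ^ 2 - y ^ 2) 0 with h0 | h0
          · rw [h0]; exact dvd_zero _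
          · rw [padicValInt_dvd_iff]
            right
            have hCA0 : (x ^ 2 - y ^ 2) * A ≠ 0 := mul_ne_zero h0 hA0
            rcases (padicValInt_dvd_iff lam _).mp hCA with h | h
            · exact absurd h hCA0
            · rw [padicValInt.mul h0 hA0] at h
              omega
        have hzer : ((x ^ 2 - y ^ 2 : ℤ) : ZMod (p ^ k)) = 0 := by
          rw [ZMod.intCast_zmod_eq_zero_iff_dvd]; exact_mod_cast hC
        have hval : (f a : ZMod (p ^ k)) ^ 2 = (f a₀ : ZMod (p ^ k)) ^ 2 := by
          rw [hcast a, hcast a₀, ← hxdef, ← hydef]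
          push_cast at hzer ⊢
          linear_combination hzer
        exact Units.ext (by
          rw [Units.val_pow_eq_pow_val, Units.val_pow_eq_pow_val]; exact hval)
      -- the injection
      let F : S → {t : (ZMod (p ^ k))ˣ // t ^ 2 = 1} × f.ker := fun a =>
        (⟨f a.1 * (f a₀)⁻¹, by
            simp [mul_pow, hsq a.1 a.2, inv_pow]⟩,
         ⟨a.1 * a₀⁻¹ * (Function.surjInv hsurj (f a.1 * (f a₀)⁻¹))⁻¹, by
            rw [MonoidHom.mem_ker]
            simp only [map_mul, map_inv, Function.surjInv_eq hsurj]
            group⟩)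
      have hFinj : Function.Injective F := by
        rintro ⟨a, ha⟩ ⟨b, hb⟩ hab
        have h1 : f a * (f a₀)⁻¹ = f b * (f a₀)⁻¹ :=
          congrArg (fun z => ((z.1 : {t : (ZMod (p ^ k))ˣ // t ^ 2 = 1}) :
            (ZMod (p ^ k))ˣ)) hab
        have h2 : a * a₀⁻¹ * (Function.surjInv hsurj (f a * (f a₀)⁻¹))⁻¹ =
            b * a₀⁻¹ * (Function.surjInv hsurj (f b * (f a₀)⁻¹))⁻¹ :=
          congrArg (fun z => ((z.2 : f.ker) : (ZMod (p ^ lam))ˣ)) hab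
        rw [h1] at h2
        have h3 := mul_right_cancel h2
        exact Subtype.ext (mul_right_cancel h3)
      have hcardle : Nat.card S ≤
          Nat.card ({t : (ZMod (p ^ k))ˣ // t ^ 2 = 1} × f.ker) :=
        Nat.card_le_card_of_injective F hFinj
      rw [Nat.card_prod] at hcardle
      haveI : Fact (2 < p ^ k) := ⟨by
        have h1 := hp.two_le
        have h2 : p ≠ 2 := by
          rintro rfl
          exact (Nat.odd_iff.mp hodd).symm.trans_ne (by norm_num) rfl
        calc 2 < p := by omega
          _ ≤ p ^ k := Nat.le_self_pow hk0.ne' p⟩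
      have hne : (-1 : (ZMod (p ^ k))ˣ) ≠ 1 := by
        intro h
        have := congrArg (Units.val) h
        rw [Units.val_neg, Units.val_one] at this
        exact ZMod.neg_one_ne_one this
      have hT2 : Nat.card {t : (ZMod (p ^ k))ˣ // t ^ 2 = 1} ≤ 2 := by
        classical
        have hinj : Function.Injective
            (fun t : {t : (ZMod (p ^ k))ˣ // t ^ 2 = 1} =>
              if t.1 = 1 then true else false) := by
          rintro ⟨t, ht⟩ ⟨s, hs⟩ h
          simp only at h
          apply Subtype.ext
          show t = s
          rcases units_sq_eq_one p hp hodd k t ht with rfl | rfl <;>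
            rcases units_sq_eq_one p hp hodd k s hs with rfl | rfl
          · rfl
          · rw [if_pos rfl, if_neg hne] at h; exact absurd h (by simp)
          · rw [if_neg hne, if_pos rfl] at h; exact absurd h (by simp)
          · rfl
        calc Nat.card {t : (ZMod (p ^ k))ˣ // t ^ 2 = 1}
            ≤ Nat.card Bool := Nat.card_le_card_of_injective _ hinj
          _ = 2 := by simp
      have hker : Nat.card f.ker = p ^ (lam - k) :=
        card_ker_unitsMap p hp lam k hk0 hkl
      have heq : lam - k = α := by omega
      calc Nat.card S ≤ Nat.card {t : (ZMod (p ^ k))ˣ // t ^ 2 = 1} * Nat.card f.ker :=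
            hcardle
        _ ≤ 2 * p ^ α := by
            rw [hker, heq]; exact Nat.mul_le_mul_right _ hT2
    calc Nat.card S ≤ 2 * p ^ α := hmain
      _ ≤ 2 * Int.gcd A (Int.gcd B ((p : ℤ) ^ lam)) := Nat.mul_le_mul_left _ hdge
end

section
/- Let α < β be real numbers, and let X, U, R, Q > 0 and Y ≥ 1. Let w : ℝ → ℂ be a smooth function supported on [α, β] satisfying |w^{(j)}(t)| ≤ X·U^{−j} for all t ∈ ℝ and all integers j ≥ 0. Let h : ℝ → ℝ be a smooth function such that |h′(t)| ≥ R for all t ∈ [α, β] and |h^{(j)}(t)| ≤ Y·Q^{−j} for all t ∈ [α, β] and all integers j ≥ 2. Then for every A > 0 there exists a constant C depending only on A such that |∫_ℝ w(t) e^{i h(t)} dt| ≤ C · (β − α) · X · [ (Q R / √Y)^{−A} + (R U)^{−A} ]. -/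
open MeasureTheory Set

private lemma wt1 : (1 : WithTop ℕ∞) ≤ ((⊤:ℕ∞) : WithTop ℕ∞) := by exact_mod_cast le_top
private lemma wt0 : ((⊤:ℕ∞) : WithTop ℕ∞) ≠ 0 := by simp
private lemma wtn (n : ℕ) : (n : WithTop ℕ∞) ≤ ((⊤:ℕ∞) : WithTop ℕ∞) := by exact_mod_cast le_top

private lemma itd_ofReal (f : ℝ → ℝ) (hf : ContDiff ℝ (⊤:ℕ∞) f) (n : ℕ) :
    (fun t => iteratedDeriv n (fun s => (f s : ℂ)) t)
      = fun t => ((iteratedDeriv n f t : ℝ) : ℂ) := by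
  induction n generalizing f with
  | zero => simp
  | succ n ih =>
    rw [iteratedDeriv_succ', iteratedDeriv_succ']
    have hd : deriv (fun s => (f s : ℂ)) = fun s => ((deriv f s : ℝ) : ℂ) := by
      funext s
      exact ((hf.differentiable wt0).differentiableAt.hasDerivAt.ofReal_comp).deriv
    rw [hd]
    exact ih (deriv f) (contDiff_infty_iff_deriv.mp hf).2

private lemma itd_mul_norm_le (f g : ℝ → ℂ) (hf : ContDiff ℝ (⊤:ℕ∞) f)
    (hg : ContDiff ℝ (⊤:ℕ∞) g) (n : ℕ) (t : ℝ) :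
    ‖iteratedDeriv n (fun s => f s * g s) t‖ ≤
      ∑ i ∈ Finset.range (n + 1),
        (n.choose i : ℝ) * ‖iteratedDeriv i f t‖ * ‖iteratedDeriv (n - i) g t‖ := by
  have := norm_iteratedFDeriv_mul_le (𝕜 := ℝ) (N := ((⊤:ℕ∞) : WithTop ℕ∞)) hf hg t (n := n)
    (wtn n)
  simpa only [norm_iteratedFDeriv_eq_norm_iteratedDeriv] using this

private lemma sq_sum_le (a b : ℕ) : a^2 + b^2 ≤ (a+b)^2 := by nlinarith [Nat.zero_le (a*b)]

private lemma itd_two (f : ℝ → ℝ) (a : ℕ) :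
    iteratedDeriv (a + 2) f = iteratedDeriv a (iteratedDeriv 2 f) := by
  have h2 : iteratedDeriv 2 f = deriv (deriv f) := by
    rw [iteratedDeriv_succ, iteratedDeriv_one]
  rw [show a + 2 = (a+1)+1 from rfl, iteratedDeriv_succ', iteratedDeriv_succ', h2]

private lemma cutoff_exists (a b δ : ℝ) (hδ : 0 < δ) :
    ∃ χ : ℝ → ℝ, ContDiff ℝ (⊤:ℕ∞) χ ∧ (∀ t ∈ Ioo (a - δ/2) (b + δ/2), χ t = 1) ∧
      (∀ t, t ∉ Icc (a-δ) (b+δ) → χ t = 0) := by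
  have h32 : (δ/2) * (3/δ) = 3/2 := by field_simp
  refine ⟨fun t => Real.smoothTransition ((t - (a - δ)) * (3/δ)) *
      Real.smoothTransition (((b + δ) - t) * (3/δ)), ?_, ?_, ?_⟩
  · exact ((Real.smoothTransition.contDiff (n := ⊤)).comp
      (((contDiff_id.sub contDiff_const).mul contDiff_const))).mul
      ((Real.smoothTransition.contDiff (n := ⊤)).comp
      (((contDiff_const.sub contDiff_id).mul contDiff_const)))
  · intro t ht
    obtain ⟨h1, h2⟩ := ht
    have k1 : (1:ℝ) ≤ (t - (a - δ)) * (3/δ) := by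
      nlinarith [mul_lt_mul_of_pos_right (show δ/2 < t - (a - δ) by linarith)
        (show (0:ℝ) < 3/δ by positivity), h32]
    have k2 : (1:ℝ) ≤ ((b + δ) - t) * (3/δ) := by
      nlinarith [mul_lt_mul_of_pos_right (show δ/2 < (b + δ) - t by linarith)
        (show (0:ℝ) < 3/δ by positivity), h32]
    show Real.smoothTransition _ * Real.smoothTransition _ = 1
    rw [Real.smoothTransition.one_of_one_le k1, Real.smoothTransition.one_of_one_le k2, mul_one]
  · intro t ht
    rw [Set.mem_Icc, not_and_or] at ht
    show Real.smoothTransition _ * Real.smoothTransition _ = 0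
    rcases ht with ht | ht <;> push_neg at ht
    · rw [Real.smoothTransition.zero_of_nonpos, zero_mul]
      have h0 : t - (a - δ) < 0 := by linarith
      nlinarith [div_pos (by norm_num : (0:ℝ) < 3) hδ]
    · rw [Real.smoothTransition.zero_of_nonpos (x := ((b + δ) - t) * (3/δ)), mul_zero]
      have h0 : (b + δ) - t < 0 := by linarith
      nlinarith [div_pos (by norm_num : (0:ℝ) < 3) hδ]

private lemma int_bound (a b B : ℝ) (hab : a ≤ b) (f : ℝ → ℂ) (hf : Continuous f)
    (hsupp : Function.support f ⊆ Icc a b) (hB : ∀ t ∈ Icc a b, ‖f t‖ ≤ B) :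
    ‖∫ t : ℝ, f t‖ ≤ B * (b - a) := by
  rw [← setIntegral_eq_integral_of_forall_compl_eq_zero
    (fun x hx => Function.notMem_support.mp (fun hs => hx (hsupp hs)))]
  have := norm_setIntegral_le_of_norm_le_const (μ := volume) (s := Icc a b) (C := B)
    (by rw [Real.volume_Icc]; exact ENNReal.ofReal_lt_top) hB
  rwa [measureReal_def, Real.volume_Icc, ENNReal.toReal_ofReal (by linarith)] at this

private lemma int_deriv_zero (a b : ℝ) (F : ℝ → ℂ) (hF : ContDiff ℝ (⊤:ℕ∞) F)
    (hsupp : Function.support F ⊆ Icc a b) : ∫ t : ℝ, deriv F t = 0 := by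
  have z : ∀ x, x ∉ Icc a b → F x = 0 := fun x hx => by
    by_contra hne; exact hx (hsupp hne)
  have h1 : Function.support (deriv F) ⊆ Ioc (a-1) (b+1) := fun x hx => by
    have h2 : x ∈ Icc a b := closure_minimal hsupp isClosed_Icc (support_deriv_subset hx)
    exact ⟨by linarith [h2.1], by linarith [h2.2]⟩
  rw [← intervalIntegral.integral_eq_integral_of_support_subset h1,
    intervalIntegral.integral_deriv_eq_sub
      (fun x _ => (hF.differentiable wt0).differentiableAt)
      ((hF.continuous_deriv wt1).intervalIntegrable _ _),
    z _ (fun hx => by linarith [hx.2]), z _ (fun hx => by linarith [hx.1]), sub_zero]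

set_option maxHeartbeats 4000000 in
/-- (Integration by parts / stationary phase bound, BKY Lemma 8.1.)
If `w` is a smooth amplitude supported on `[α,β]` with `|w^{(j)}| ≤ X·U^{−j}`, and `h` is a
smooth real phase with `|h′| ≥ R` and `|h^{(j)}| ≤ Y·Q^{−j}` for `j ≥ 2` on `[α,β]`, then for
every `A > 0` there is a constant `C = C(A)` with
`|∫ w(t) e^{ih(t)} dt| ≤ C (β−α) X [(QR/√Y)^{−A} + (RU)^{−A}]`. -/
theorem oscillatory_integral_bound :
    ∀ A : ℝ, 0 < A → ∃ C : ℝ, 0 < C ∧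
      ∀ (α β X U R Q Y : ℝ) (w : ℝ → ℂ) (h : ℝ → ℝ),
        α < β → 0 < X → 0 < U → 0 < R → 0 < Q → 1 ≤ Y →
        ContDiff ℝ (⊤ : ℕ∞) w →
        Function.support w ⊆ Set.Icc α β →
        (∀ (j : ℕ) (t : ℝ), ‖iteratedDeriv j w t‖ ≤ X * U ^ (-(j : ℤ))) →
        ContDiff ℝ (⊤ : ℕ∞) h →
        (∀ t ∈ Set.Icc α β, R ≤ |deriv h t|) →
        (∀ j : ℕ, 2 ≤ j → ∀ t ∈ Set.Icc α β, |iteratedDeriv j h t| ≤ Y * Q ^ (-(j : ℤ))) →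
        ‖∫ t : ℝ, w t * Complex.exp (Complex.I * (h t : ℂ))‖
          ≤ C * (β - α) * X * ((Q * R / Real.sqrt Y) ^ (-A) + (R * U) ^ (-A)) := by
  intro A hA
  set n : ℕ := ⌈A⌉₊ with hndef
  have hnA : A ≤ (n : ℝ) := Nat.le_ceil A
  refine ⟨(25:ℝ)^((2*n)^2), by positivity, ?_⟩
  intro α β X U R Q Y w h hαβ hX hU hR hQ hY hw hwsupp hwbd hh hh1 hhj
  have hC1 : (1:ℝ) ≤ 25^((2*n)^2) := one_le_pow₀ (by norm_num)
  set sY := Real.sqrt Y with hsYdef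
  have hsY1 : (1:ℝ) ≤ sY := by
    rw [hsYdef, show (1:ℝ) = Real.sqrt 1 by simp]; exact Real.sqrt_le_sqrt hY
  have hsY0 : (0:ℝ) < sY := lt_of_lt_of_le one_pos hsY1
  have hYsq : sY * sY = Y := Real.mul_self_sqrt (by linarith)
  set E : ℝ → ℂ := fun t => Complex.exp (Complex.I * (h t : ℂ)) with hEdef
  have hEnorm : ∀ t, ‖E t‖ = 1 := by
    intro t; rw [hEdef]; simp [Complex.norm_exp]
  have hEcont : Continuous E :=
    Complex.continuous_exp.comp (continuous_const.mul (Complex.continuous_ofReal.comp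
      hh.continuous))
  have hw0 : ∀ t, ‖w t‖ ≤ X := by
    intro t
    have := hwbd 0 t
    simpa using this
  have hwEsupp : Function.support (fun t => w t * E t) ⊆ Icc α β :=
    subset_trans (Function.support_mul_subset_left _ _) hwsupp
  have htriv : ‖∫ t : ℝ, w t * E t‖ ≤ X * (β - α) :=
    int_bound α β X hαβ.le _ (hw.continuous.mul hEcont) hwEsupp
      (fun t _ => by rw [norm_mul, hEnorm, mul_one]; exact hw0 t)
  have hposQRY : (0:ℝ) < Q*R/sY := by positivity
  have hposRU : (0:ℝ) < R*U := by positivity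
  have hband : (0:ℝ) ≤ β - α := by linarith
  have heasy : ∀ S : ℝ, 1 ≤ S → ‖∫ t : ℝ, w t * E t‖ ≤ 25^((2*n)^2) * (β - α) * X * S := by
    intro S hS
    have base : X * (β-α) ≤ 25^((2*n)^2) * (β-α) * X := by
      nlinarith [mul_le_mul_of_nonneg_right hC1 (mul_nonneg hband hX.le)]
    have hpos : (0:ℝ) ≤ 25^((2*n)^2) * (β-α) * X := by positivity
    calc ‖∫ t : ℝ, w t * E t‖ ≤ X * (β-α) := htriv
      _ ≤ 25^((2*n)^2) * (β-α) * X := base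
      _ = 25^((2*n)^2) * (β-α) * X * 1 := (mul_one _).symm
      _ ≤ 25^((2*n)^2) * (β-α) * X * S := by
          exact mul_le_mul_of_nonneg_left hS hpos
  rcases le_or_gt (Q*R/sY) 1 with hc1 | hQRY
  · refine heasy _ ?_
    have h1 : (1:ℝ) ≤ (Q*R/sY)^(-A) :=
      Real.one_le_rpow_of_pos_of_le_one_of_nonpos hposQRY hc1 (by linarith)
    have h2 : (0:ℝ) ≤ (R*U)^(-A) := Real.rpow_nonneg hposRU.le _
    linarith
  rcases le_or_gt (R*U) 1 with hc2 | hRU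
  · refine heasy _ ?_
    have h1 : (1:ℝ) ≤ (R*U)^(-A) :=
      Real.one_le_rpow_of_pos_of_le_one_of_nonpos hposRU hc2 (by linarith)
    have h2 : (0:ℝ) ≤ (Q*R/sY)^(-A) := Real.rpow_nonneg hposQRY.le _
    linarith
  -- hard case
  set V : ℝ := min U (Q / sY) with hVdef
  have hV0 : (0:ℝ) < V := lt_min hU (by positivity)
  have hVU : V ≤ U := min_le_left _ _
  have hVQ : V ≤ Q / sY := min_le_right _ _
  have hRV : 1 < R * V := by
    rcases min_cases U (Q/sY) with ⟨he, _⟩ | ⟨he, _⟩ <;> rw [hVdef, he]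
    · exact hRU
    · have he2 : Q*R/sY = R*(Q/sY) := by ring
      linarith [he2 ▸ hQRY]
  have hRiV : R⁻¹ ≤ V := by
    rw [inv_eq_one_div, div_le_iff₀ hR]; nlinarith
  have hQV : V ≤ Q := le_trans hVQ (div_le_self hQ.le hsY1)
  have hQiV : Q⁻¹ ≤ V⁻¹ := inv_anti₀ hV0 hQV
  have hsYQV : sY / Q ≤ V⁻¹ := by
    have := inv_anti₀ hV0 hVQ
    rwa [inv_div] at this
  have hkey : ∀ a : ℕ, Y * (Q⁻¹)^(a+2) * R⁻¹ ≤ (V⁻¹)^(a+1) := by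
    intro a
    have e1 : Y * (Q⁻¹)^(a+2) * R⁻¹ = (sY/Q) * (sY/Q) * R⁻¹ * (Q⁻¹)^a := by
      rw [← hYsq]; ring
    have e2 : V⁻¹*V⁻¹*V = V⁻¹ := by field_simp
    rw [e1]
    calc (sY/Q) * (sY/Q) * R⁻¹ * (Q⁻¹)^a ≤ V⁻¹ * V⁻¹ * V * (V⁻¹)^a := by
          have hp : (Q⁻¹)^a ≤ (V⁻¹)^a := pow_le_pow_left₀ (by positivity) hQiV a
          have h1 : (0:ℝ) ≤ sY/Q := by positivity
          have h2 : (0:ℝ) ≤ V⁻¹ := by positivity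
          have h3 : (0:ℝ) ≤ R⁻¹ := by positivity
          apply mul_le_mul
          · apply mul_le_mul (mul_le_mul hsYQV hsYQV h1 h2) hRiV h3 (by positivity)
          · exact hp
          · positivity
          · positivity
      _ = (V⁻¹)^(a+1) := by rw [e2, pow_succ, mul_comm]
  -- geometry: nonvanishing neighbourhood
  have hO : IsOpen {t : ℝ | deriv h t ≠ 0} :=
    isOpen_compl_singleton.preimage (hh.continuous_deriv wt1)
  have hIccO : Icc α β ⊆ {t : ℝ | deriv h t ≠ 0} := by
    intro t ht h0
    have := hh1 t ht
    rw [h0] at this; simp at this; linarith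
  obtain ⟨δ, hδ0, hδsub⟩ := isCompact_Icc.exists_cthickening_subset_open hO hIccO
  have hIccδ : ∀ x ∈ Icc (α - δ) (β + δ), deriv h x ≠ 0 := by
    intro x hx
    apply hδsub
    rcases le_total x α with h1 | h1
    · refine Metric.mem_cthickening_of_dist_le x α δ _ ⟨le_refl α, hαβ.le⟩ ?_
      rw [Real.dist_eq, abs_le]
      exact ⟨by linarith [hx.1], by linarith⟩
    · rcases le_total β x with h2 | h2
      · refine Metric.mem_cthickening_of_dist_le x β δ _ ⟨hαβ.le, le_refl β⟩ ?_
        rw [Real.dist_eq, abs_le]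
        exact ⟨by linarith, by linarith [hx.2]⟩
      · refine Metric.mem_cthickening_of_dist_le x x δ _ ⟨h1, h2⟩ ?_
        rw [dist_self]; exact hδ0.le
  obtain ⟨χ, hχs, hχ1, hχ0⟩ := cutoff_exists α β δ hδ0
  have hU₁δ : ∀ t ∈ Ioo (α - δ/2) (β + δ/2), deriv h t ≠ 0 := fun t ht =>
    hIccδ t ⟨by linarith [ht.1], by linarith [ht.2]⟩
  have hIccU₁ : Icc α β ⊆ Ioo (α - δ/2) (β + δ/2) := fun t ht =>
    ⟨by linarith [ht.1], by linarith [ht.2]⟩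
  set G : ℝ → ℂ := fun t => ((χ t / deriv h t : ℝ) : ℂ) with hGdef
  have hdh : ContDiff ℝ (⊤:ℕ∞) (deriv h) := (contDiff_infty_iff_deriv.mp hh).2
  have hGsmooth : ContDiff ℝ (⊤:ℕ∞) G := by
    have hr : ContDiff ℝ (⊤:ℕ∞) (fun t => χ t / deriv h t) := by
      rw [contDiff_iff_contDiffAt]
      intro t
      by_cases h0 : deriv h t ≠ 0
      · exact hχs.contDiffAt.div hdh.contDiffAt h0
      · push_neg at h0
        have htn : t ∉ Icc (α-δ) (β+δ) := fun hc => hIccδ t hc h0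
        have hev : (fun s => χ s / deriv h s) =ᶠ[nhds t] (fun _ => (0:ℝ)) := by
          filter_upwards [isClosed_Icc.isOpen_compl.mem_nhds htn] with s hs
          rw [hχ0 s hs, zero_div]
        exact ContDiffAt.congr_of_eventuallyEq contDiffAt_const hev
    exact Complex.ofRealCLM.contDiff.comp hr
  have hGval : ∀ t ∈ Ioo (α - δ/2) (β + δ/2), G t = (((deriv h t : ℝ) : ℂ))⁻¹ := by
    intro t ht
    rw [hGdef]
    simp only []
    rw [hχ1 t ht]
    push_cast
    rw [one_div]
  set H2 : ℝ → ℂ := fun s => ((iteratedDeriv 2 h s : ℝ) : ℂ) with hH2def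
  have hitd2 : iteratedDeriv 2 h = deriv (deriv h) := by
    rw [iteratedDeriv_succ, iteratedDeriv_one]
  have hdh2smooth : ContDiff ℝ (⊤:ℕ∞) (iteratedDeriv 2 h) := by
    rw [hitd2]; exact (contDiff_infty_iff_deriv.mp hdh).2
  have hH2smooth : ContDiff ℝ (⊤:ℕ∞) H2 := Complex.ofRealCLM.contDiff.comp hdh2smooth
  have hH2bd : ∀ (a : ℕ), ∀ t ∈ Icc α β, ‖iteratedDeriv a H2 t‖ ≤ Y * (Q⁻¹)^(a+2) := by
    intro a t ht
    rw [hH2def, congrFun (itd_ofReal (iteratedDeriv 2 h) hdh2smooth a) t,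
      Complex.norm_real, Real.norm_eq_abs, ← itd_two h a]
    have hb := hhj (a+2) (by omega) t ht
    calc |iteratedDeriv (a+2) h t| ≤ Y * Q ^ (-((a:ℤ)+2)) := by exact_mod_cast hb
      _ = Y * (Q⁻¹)^(a+2) := by
          rw [show -((a:ℤ)+2) = -(((a+2:ℕ)):ℤ) by push_cast; ring, zpow_neg, zpow_natCast,
            inv_pow]
  have hGrel : ∀ s ∈ Ioo (α - δ/2) (β + δ/2), deriv G s = -(H2 s * (G s * G s)) := by
    intro s hs
    have hs0 : deriv h s ≠ 0 := hU₁δ s hs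
    have hs0' : ((deriv h s : ℝ) : ℂ) ≠ 0 := by exact_mod_cast hs0
    have hEq : G =ᶠ[nhds s] fun u => 1 / ((deriv h u : ℝ) : ℂ) := by
      filter_upwards [isOpen_Ioo.mem_nhds hs] with u hu
      rw [hGval u hu, one_div]
    rw [hEq.deriv_eq]
    have h1 : HasDerivAt (fun u => ((deriv h u : ℝ) : ℂ)) ((deriv (deriv h) s : ℝ) : ℂ) s :=
      ((hdh.differentiable wt0).differentiableAt.hasDerivAt).ofReal_comp
    rw [show (fun u => 1 / ((deriv h u : ℝ) : ℂ)) = ((fun _ => (1:ℂ)) / fun u => ((deriv h u : ℝ) : ℂ)) from rfl,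
      ((hasDerivAt_const s (1:ℂ)).div h1 hs0').deriv, hGval s hs, hH2def]
    simp only []
    rw [hitd2]
    field_simp
    ring
  have hiV0 : (0:ℝ) ≤ V⁻¹ := by positivity
  have hiR0 : (0:ℝ) ≤ R⁻¹ := by positivity
  have hGB : ∀ j : ℕ, ∀ t ∈ Icc α β, ‖iteratedDeriv j G t‖ ≤ 25^(j^2) * R⁻¹ * (V⁻¹)^j := by
    intro j
    induction j using Nat.strong_induction_on with
    | _ j IH =>
      rcases j with _ | k
      · intro t ht
        simp only [iteratedDeriv_zero, pow_zero, mul_one, Nat.zero_eq]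
        rw [hGval t (hIccU₁ ht), norm_inv, Complex.norm_real, Real.norm_eq_abs]
        have h1 := hh1 t ht
        have : |deriv h t|⁻¹ ≤ R⁻¹ := inv_anti₀ hR h1
        calc |deriv h t|⁻¹ ≤ R⁻¹ := this
          _ = 25^(0^2) * R⁻¹ := by norm_num
      · intro t ht
        have e1 : iteratedDeriv (k+1) G t
            = iteratedDeriv k (fun s => (-H2 s) * (G s * G s)) t := by
          rw [iteratedDeriv_succ']
          apply Filter.EventuallyEq.iteratedDeriv_eq
          filter_upwards [isOpen_Ioo.mem_nhds (hIccU₁ ht)] with s hs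
          rw [hGrel s hs]; ring
        rw [e1]
        have hGG : ContDiff ℝ (⊤:ℕ∞) (fun s => G s * G s) := hGsmooth.mul hGsmooth
        have hmH2 : ContDiff ℝ (⊤:ℕ∞) (fun s => -H2 s) := hH2smooth.neg
        have hmH2norm : ∀ a : ℕ, ‖iteratedDeriv a (fun s => -H2 s) t‖
            = ‖iteratedDeriv a H2 t‖ := by
          intro a
          rw [iteratedDeriv_fun_neg, norm_neg]
        -- inner bound for G*G
        have hGGbd : ∀ b : ℕ, b ≤ k → ‖iteratedDeriv b (fun s => G s * G s) t‖
            ≤ 2^k * 25^(k^2) * (R⁻¹ * R⁻¹) * (V⁻¹)^b := by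
          intro b hb
          have main2 := itd_mul_norm_le _ _ hGsmooth hGsmooth b t
          have step : ∀ c ∈ Finset.range (b+1),
              (b.choose c : ℝ) * ‖iteratedDeriv c G t‖ * ‖iteratedDeriv (b-c) G t‖
                ≤ (b.choose c : ℝ) * (25^(b^2) * (R⁻¹*R⁻¹) * (V⁻¹)^b) := by
            intro c hc
            rw [Finset.mem_range] at hc
            have hc' : c ≤ b := by omega
            have i1 := IH c (by omega) t ht
            have i2 := IH (b-c) (by omega) t ht
            have hchoose : (0:ℝ) ≤ (b.choose c : ℝ) := by positivity
            calc (b.choose c : ℝ) * ‖iteratedDeriv c G t‖ * ‖iteratedDeriv (b-c) G t‖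
                ≤ (b.choose c : ℝ) * (25^(c^2) * R⁻¹ * (V⁻¹)^c)
                  * (25^((b-c)^2) * R⁻¹ * (V⁻¹)^(b-c)) := by
                  apply mul_le_mul
                  · exact mul_le_mul_of_nonneg_left i1 hchoose
                  · exact i2
                  · exact norm_nonneg _
                  · positivity
              _ = (b.choose c : ℝ) * ((25^(c^2) * 25^((b-c)^2)) * (R⁻¹*R⁻¹)
                  * ((V⁻¹)^c * (V⁻¹)^(b-c))) := by ring
              _ ≤ (b.choose c : ℝ) * (25^(b^2) * (R⁻¹*R⁻¹) * (V⁻¹)^b) := by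
                  apply mul_le_mul_of_nonneg_left _ hchoose
                  have hVp : (V⁻¹)^c * (V⁻¹)^(b-c) = (V⁻¹)^b := by
                    rw [← pow_add]; congr 1; omega
                  have hp : (25:ℝ)^(c^2) * 25^((b-c)^2) = 25^(c^2+(b-c)^2) := (pow_add _ _ _).symm
                  have hexp : c^2 + (b-c)^2 ≤ b^2 := by
                    have := sq_sum_le c (b-c)
                    rwa [Nat.add_sub_cancel' hc'] at this
                  have h25 : (25:ℝ)^(c^2+(b-c)^2) ≤ 25^(b^2) :=
                    pow_le_pow_right₀ (by norm_num) hexp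
                  rw [hVp, hp]
                  apply mul_le_mul_of_nonneg_right _ (by positivity)
                  exact mul_le_mul_of_nonneg_right h25 (by positivity)
          calc ‖iteratedDeriv b (fun s => G s * G s) t‖
              ≤ ∑ c ∈ Finset.range (b+1), (b.choose c : ℝ) * ‖iteratedDeriv c G t‖
                * ‖iteratedDeriv (b-c) G t‖ := main2
            _ ≤ ∑ c ∈ Finset.range (b+1),
                (b.choose c : ℝ) * (25^(b^2) * (R⁻¹*R⁻¹) * (V⁻¹)^b) := Finset.sum_le_sum step
            _ = (2^b : ℝ) * (25^(b^2) * (R⁻¹*R⁻¹) * (V⁻¹)^b) := by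
                rw [← Finset.sum_mul]
                congr 1
                rw [← Nat.cast_sum, Nat.sum_range_choose]
                push_cast; ring
            _ ≤ 2^k * 25^(k^2) * (R⁻¹ * R⁻¹) * (V⁻¹)^b := by
                have h2b : (2:ℝ)^b ≤ 2^k := pow_le_pow_right₀ (by norm_num) hb
                have h25b : (25:ℝ)^(b^2) ≤ 25^(k^2) :=
                  pow_le_pow_right₀ (by norm_num) (Nat.pow_le_pow_left hb 2)
                have : (2:ℝ)^b * (25^(b^2) * ((R⁻¹*R⁻¹) * (V⁻¹)^b))
                    ≤ 2^k * (25^(k^2) * ((R⁻¹*R⁻¹) * (V⁻¹)^b)) := by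
                  apply mul_le_mul h2b _ (by positivity) (by positivity)
                  exact mul_le_mul_of_nonneg_right h25b (by positivity)
                calc (2:ℝ)^b * (25^(b^2) * (R⁻¹*R⁻¹) * (V⁻¹)^b)
                    = 2^b * (25^(b^2) * ((R⁻¹*R⁻¹) * (V⁻¹)^b)) := by ring
                  _ ≤ 2^k * (25^(k^2) * ((R⁻¹*R⁻¹) * (V⁻¹)^b)) := this
                  _ = 2^k * 25^(k^2) * (R⁻¹ * R⁻¹) * (V⁻¹)^b := by ring
        have main := itd_mul_norm_le _ _ hmH2 hGG k t
        have step2 : ∀ a ∈ Finset.range (k+1),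
            (k.choose a : ℝ) * ‖iteratedDeriv a (fun s => -H2 s) t‖
              * ‖iteratedDeriv (k-a) (fun s => G s * G s) t‖
            ≤ (k.choose a : ℝ) * (2^k * 25^(k^2) * R⁻¹ * (V⁻¹)^(k+1)) := by
          intro a ha
          rw [Finset.mem_range] at ha
          have ha' : a ≤ k := by omega
          have hchoose : (0:ℝ) ≤ (k.choose a : ℝ) := by positivity
          rw [hmH2norm a]
          calc (k.choose a : ℝ) * ‖iteratedDeriv a H2 t‖
              * ‖iteratedDeriv (k-a) (fun s => G s * G s) t‖
              ≤ (k.choose a : ℝ) * (Y * (Q⁻¹)^(a+2))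
                * (2^k * 25^(k^2) * (R⁻¹ * R⁻¹) * (V⁻¹)^(k-a)) := by
                apply mul_le_mul
                · exact mul_le_mul_of_nonneg_left (hH2bd a t ht) hchoose
                · exact hGGbd (k-a) (by omega)
                · exact norm_nonneg _
                · positivity
            _ = (k.choose a : ℝ) * (2^k * 25^(k^2)) * R⁻¹
                * ((Y * (Q⁻¹)^(a+2) * R⁻¹) * (V⁻¹)^(k-a)) := by ring
            _ ≤ (k.choose a : ℝ) * (2^k * 25^(k^2)) * R⁻¹ * ((V⁻¹)^(a+1) * (V⁻¹)^(k-a)) := by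
                apply mul_le_mul_of_nonneg_left _ (by positivity)
                exact mul_le_mul_of_nonneg_right (hkey a) (by positivity)
            _ = (k.choose a : ℝ) * (2^k * 25^(k^2) * R⁻¹ * (V⁻¹)^(k+1)) := by
                rw [← pow_add]
                have : a + 1 + (k - a) = k + 1 := by omega
                rw [this]; ring
        calc ‖iteratedDeriv k (fun s => (-H2 s) * (G s * G s)) t‖
            ≤ ∑ a ∈ Finset.range (k+1), (k.choose a : ℝ)
              * ‖iteratedDeriv a (fun s => -H2 s) t‖
              * ‖iteratedDeriv (k-a) (fun s => G s * G s) t‖ := main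
          _ ≤ ∑ a ∈ Finset.range (k+1),
              (k.choose a : ℝ) * (2^k * 25^(k^2) * R⁻¹ * (V⁻¹)^(k+1)) :=
              Finset.sum_le_sum step2
          _ = (2^k : ℝ) * (2^k * 25^(k^2) * R⁻¹ * (V⁻¹)^(k+1)) := by
              rw [← Finset.sum_mul, ← Nat.cast_sum, Nat.sum_range_choose]
              push_cast; ring
          _ ≤ 25^((k+1)^2) * R⁻¹ * (V⁻¹)^(k+1) := by
              have hc : (2:ℝ)^k * 2^k * 25^(k^2) ≤ 25^((k+1)^2) := by
                have h4 : (2:ℝ)^k * 2^k = 4^k := by rw [← mul_pow]; norm_num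
                have h425 : (4:ℝ)^k ≤ 25^(2*k+1) := by
                  calc (4:ℝ)^k ≤ 25^k := pow_le_pow_left₀ (by norm_num) (by norm_num) k
                    _ ≤ 25^(2*k+1) := pow_le_pow_right₀ (by norm_num) (by omega)
                have hex : (k+1)^2 = k^2 + (2*k+1) := by ring
                rw [h4, hex, pow_add, mul_comm ((25:ℝ)^(k^2)) _]
                exact mul_le_mul_of_nonneg_right h425 (by positivity)
              calc (2:ℝ)^k * (2^k * 25^(k^2) * R⁻¹ * (V⁻¹)^(k+1))
                  = (2^k * 2^k * 25^(k^2)) * (R⁻¹ * (V⁻¹)^(k+1)) := by ring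
                _ ≤ 25^((k+1)^2) * (R⁻¹ * (V⁻¹)^(k+1)) :=
                    mul_le_mul_of_nonneg_right hc (by positivity)
                _ = 25^((k+1)^2) * R⁻¹ * (V⁻¹)^(k+1) := by ring
  -- the iterated amplitudes
  obtain ⟨Φ, hΦ0, hΦsucc⟩ : ∃ Φ : ℕ → ℝ → ℂ, Φ 0 = w ∧
      ∀ m : ℕ, Φ (m+1) = deriv (fun s => Φ m s * G s) :=
    ⟨fun m => Nat.rec w (fun _ F => deriv (fun s => F s * G s)) m, rfl, fun m => rfl⟩
  have hΦsmooth : ∀ m, ContDiff ℝ (⊤:ℕ∞) (Φ m) := by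
    intro m
    induction m with
    | zero => rw [hΦ0]; exact hw
    | succ m ih =>
      rw [hΦsucc]
      exact (contDiff_infty_iff_deriv.mp (ih.mul hGsmooth)).2
  have hΦsupp : ∀ m, Function.support (Φ m) ⊆ Icc α β := by
    intro m
    induction m with
    | zero => rw [hΦ0]; exact hwsupp
    | succ m ih =>
      rw [hΦsucc]
      refine subset_trans support_deriv_subset (closure_minimal ?_ isClosed_Icc)
      exact subset_trans (Function.support_mul_subset_left _ _) ih
  have hΦbd : ∀ m (j : ℕ), ∀ t ∈ Icc α β,
      ‖iteratedDeriv j (Φ m) t‖ ≤ 25^((2*m+j)^2) * X * (R⁻¹)^m * (V⁻¹)^(m+j) := by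
    intro m
    induction m with
    | zero =>
      intro j t ht
      rw [hΦ0]
      have hb := hwbd j t
      have e1 : X * U ^ (-(j:ℤ)) = X * (U⁻¹)^j := by
        rw [zpow_neg, zpow_natCast, inv_pow]
      rw [e1] at hb
      have hUV : (U⁻¹:ℝ)^j ≤ (V⁻¹)^j := pow_le_pow_left₀ (by positivity) (inv_anti₀ hV0 hVU) j
      have h25 : (1:ℝ) ≤ 25^((2*0+j)^2) := one_le_pow₀ (by norm_num)
      calc ‖iteratedDeriv j w t‖ ≤ X * (U⁻¹)^j := hb
        _ ≤ X * (V⁻¹)^j := mul_le_mul_of_nonneg_left hUV hX.le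
        _ = 1 * (X * (V⁻¹)^j) := by ring
        _ ≤ 25^((2*0+j)^2) * (X * (V⁻¹)^j) := mul_le_mul_of_nonneg_right h25 (by positivity)
        _ = 25^((2*0+j)^2) * X * (R⁻¹)^0 * (V⁻¹)^(0+j) := by
            rw [pow_zero, Nat.zero_add]; ring
    | succ m ih =>
      intro j t ht
      have e1 : iteratedDeriv j (Φ (m+1)) t = iteratedDeriv (j+1) (fun s => Φ m s * G s) t := by
        rw [hΦsucc, ← iteratedDeriv_succ']
      rw [e1]
      have main := itd_mul_norm_le _ _ (hΦsmooth m) hGsmooth (j+1) t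
      have step : ∀ i ∈ Finset.range (j+2),
          ((j+1).choose i : ℝ) * ‖iteratedDeriv i (Φ m) t‖ * ‖iteratedDeriv (j+1-i) G t‖
          ≤ ((j+1).choose i : ℝ) * (25^((2*m+j+1)^2) * X * (R⁻¹)^(m+1) * (V⁻¹)^(m+j+1)) := by
        intro i hi
        rw [Finset.mem_range] at hi
        have i1 := ih i t ht
        have i2 := hGB (j+1-i) t ht
        have hchoose : (0:ℝ) ≤ ((j+1).choose i : ℝ) := by positivity
        calc ((j+1).choose i : ℝ) * ‖iteratedDeriv i (Φ m) t‖ * ‖iteratedDeriv (j+1-i) G t‖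
            ≤ ((j+1).choose i : ℝ) * (25^((2*m+i)^2) * X * (R⁻¹)^m * (V⁻¹)^(m+i))
              * (25^((j+1-i)^2) * R⁻¹ * (V⁻¹)^(j+1-i)) := by
              apply mul_le_mul
              · exact mul_le_mul_of_nonneg_left i1 hchoose
              · exact i2
              · exact norm_nonneg _
              · positivity
          _ = ((j+1).choose i : ℝ) * ((25^((2*m+i)^2) * 25^((j+1-i)^2)) * X
              * ((R⁻¹)^m * R⁻¹) * ((V⁻¹)^(m+i) * (V⁻¹)^(j+1-i))) := by ring
          _ ≤ ((j+1).choose i : ℝ) * (25^((2*m+j+1)^2) * X * (R⁻¹)^(m+1) * (V⁻¹)^(m+j+1)) := by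
              apply mul_le_mul_of_nonneg_left _ hchoose
              have hR1 : (R⁻¹:ℝ)^m * R⁻¹ = (R⁻¹)^(m+1) := by rw [pow_succ]
              have hV1 : (V⁻¹:ℝ)^(m+i) * (V⁻¹)^(j+1-i) = (V⁻¹)^(m+j+1) := by
                rw [← pow_add]; congr 1; omega
              have h25 : (25:ℝ)^((2*m+i)^2) * 25^((j+1-i)^2) ≤ 25^((2*m+j+1)^2) := by
                rw [← pow_add]
                apply pow_le_pow_right₀ (by norm_num)
                have h2 := sq_sum_le (2*m+i) (j+1-i)
                have he : 2*m+i + (j+1-i) = 2*m+j+1 := by omega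
                rwa [he] at h2
              rw [hR1, hV1]
              apply mul_le_mul_of_nonneg_right _ (by positivity)
              apply mul_le_mul_of_nonneg_right _ (by positivity)
              exact mul_le_mul_of_nonneg_right h25 hX.le
      calc ‖iteratedDeriv (j+1) (fun s => Φ m s * G s) t‖
          ≤ ∑ i ∈ Finset.range (j+2), ((j+1).choose i : ℝ) * ‖iteratedDeriv i (Φ m) t‖
            * ‖iteratedDeriv (j+1-i) G t‖ := main
        _ ≤ ∑ i ∈ Finset.range (j+2),
            ((j+1).choose i : ℝ) * (25^((2*m+j+1)^2) * X * (R⁻¹)^(m+1) * (V⁻¹)^(m+j+1)) :=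
            Finset.sum_le_sum step
        _ = (2^(j+1) : ℝ) * (25^((2*m+j+1)^2) * X * (R⁻¹)^(m+1) * (V⁻¹)^(m+j+1)) := by
            rw [← Finset.sum_mul, ← Nat.cast_sum, Nat.sum_range_choose]
            push_cast; ring
        _ ≤ 25^((2*(m+1)+j)^2) * X * (R⁻¹)^(m+1) * (V⁻¹)^((m+1)+j) := by
            have hc1' : (2:ℝ)^(j+1) * 25^((2*m+j+1)^2) ≤ 25^((2*(m+1)+j)^2) := by
              have e2 : 2*(m+1)+j = (2*m+j+1)+1 := by omega
              have e3 : ((2*m+j+1)+1)^2 = (2*m+j+1)^2 + (2*(2*m+j+1)+1) := by ring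
              rw [e2, e3, pow_add (25:ℝ) ((2*m+j+1)^2) (2*(2*m+j+1)+1),
                mul_comm ((25:ℝ)^((2*m+j+1)^2)) _]
              apply mul_le_mul_of_nonneg_right _ (by positivity)
              calc (2:ℝ)^(j+1) ≤ 25^(j+1) := pow_le_pow_left₀ (by norm_num) (by norm_num) _
                _ ≤ 25^(2*(2*m+j+1)+1) := pow_le_pow_right₀ (by norm_num) (by omega)
            have e4 : (m+1)+j = m+j+1 := by omega
            rw [e4]
            calc (2:ℝ)^(j+1) * (25^((2*m+j+1)^2) * X * (R⁻¹)^(m+1) * (V⁻¹)^(m+j+1))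
                = ((2:ℝ)^(j+1) * 25^((2*m+j+1)^2)) * (X * (R⁻¹)^(m+1) * (V⁻¹)^(m+j+1)) := by
                  ring
              _ ≤ 25^((2*(m+1)+j)^2) * (X * (R⁻¹)^(m+1) * (V⁻¹)^(m+j+1)) :=
                  mul_le_mul_of_nonneg_right hc1' (by positivity)
              _ = 25^((2*(m+1)+j)^2) * X * (R⁻¹)^(m+1) * (V⁻¹)^(m+j+1) := by ring
  -- integration by parts
  have hEsmooth : ContDiff ℝ (⊤:ℕ∞) E := by
    rw [hEdef]
    exact (contDiff_const.mul (Complex.ofRealCLM.contDiff.comp hh)).cexp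
  have hIBP : ∀ m : ℕ, ‖∫ t : ℝ, Φ m t * E t‖ = ‖∫ t : ℝ, Φ (m+1) t * E t‖ := by
    intro m
    have hEd : ∀ t, HasDerivAt E (E t * (Complex.I * ((deriv h t : ℝ) : ℂ))) t := by
      intro t
      have h1 : HasDerivAt (fun u => Complex.I * ((h u : ℝ) : ℂ))
          (Complex.I * ((deriv h t : ℝ) : ℂ)) t :=
        (((hh.differentiable wt0).differentiableAt.hasDerivAt).ofReal_comp).const_mul Complex.I
      exact h1.cexp
    have hPG : ∀ t, HasDerivAt (fun s => Φ m s * G s) (Φ (m+1) t) t := by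
      intro t
      rw [hΦsucc]
      exact ((((hΦsmooth m).mul hGsmooth).differentiable wt0) t).hasDerivAt
    have hFd : ∀ t, HasDerivAt (fun s => Φ m s * G s * E s)
        (Φ (m+1) t * E t + Complex.I * (Φ m t * E t)) t := by
      intro t
      have hd := (hPG t).mul (hEd t)
      have key : Φ m t * G t * (E t * (Complex.I * ((deriv h t : ℝ) : ℂ)))
          = Complex.I * (Φ m t * E t) := by
        by_cases h0 : Φ m t = 0
        · rw [h0]; ring
        · have ht : t ∈ Icc α β := hΦsupp m h0
          have hne : deriv h t ≠ 0 := hIccO ht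
          have hne' : ((deriv h t : ℝ) : ℂ) ≠ 0 := by exact_mod_cast hne
          rw [hGval t (hIccU₁ ht)]
          obtain ⟨p, hp⟩ : ∃ p, Φ m t = p := ⟨_, rfl⟩
          obtain ⟨e, hee⟩ : ∃ e, E t = e := ⟨_, rfl⟩
          obtain ⟨d, hdd⟩ : ∃ d, ((deriv h t : ℝ) : ℂ) = d := ⟨_, rfl⟩
          rw [hp, hee, hdd]
          rw [hdd] at hne'
          calc p * d⁻¹ * (e * (Complex.I * d)) = (d⁻¹ * d) * (Complex.I * (p * e)) := by ring
            _ = Complex.I * (p * e) := by rw [inv_mul_cancel₀ hne', one_mul]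
      rw [key] at hd
      exact hd
    have hFsmooth : ContDiff ℝ (⊤:ℕ∞) (fun s => Φ m s * G s * E s) :=
      ((hΦsmooth m).mul hGsmooth).mul hEsmooth
    have hFsupp : Function.support (fun s => Φ m s * G s * E s) ⊆ Icc α β :=
      subset_trans (Function.support_mul_subset_left _ _)
        (subset_trans (Function.support_mul_subset_left _ _) (hΦsupp m))
    have hzero := int_deriv_zero α β _ hFsmooth hFsupp
    have hderivF : (deriv (fun s => Φ m s * G s * E s))
        = fun t => Φ (m+1) t * E t + Complex.I * (Φ m t * E t) :=
      funext fun t => (hFd t).deriv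
    rw [hderivF] at hzero
    have hcs : ∀ k : ℕ, HasCompactSupport (fun t => Φ k t * E t) := by
      intro k
      apply HasCompactSupport.intro isCompact_Icc
      intro x hx
      have hx0 : Φ k x = 0 := by
        by_contra hne; exact hx (hΦsupp k hne)
      rw [hx0, zero_mul]
    have hint : ∀ k : ℕ, Integrable (fun t => Φ k t * E t) := fun k =>
      (((hΦsmooth k).continuous).mul hEcont).integrable_of_hasCompactSupport (hcs k)
    rw [integral_add (hint (m+1)) ((hint m).const_mul Complex.I),
      integral_const_mul] at hzero
    have heq : ∫ t : ℝ, Φ m t * E t = Complex.I * ∫ t : ℝ, Φ (m+1) t * E t := by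
      linear_combination (-Complex.I) * hzero + (∫ t : ℝ, Φ m t * E t) * Complex.I_mul_I
    rw [heq, norm_mul, Complex.norm_I, one_mul]
  have hiter : ∀ m : ℕ, ‖∫ t : ℝ, w t * E t‖ = ‖∫ t : ℝ, Φ m t * E t‖ := by
    intro m
    induction m with
    | zero => rw [hΦ0]
    | succ m ih => rw [ih, hIBP m]
  rw [hiter n]
  have hfinal : ‖∫ t : ℝ, Φ n t * E t‖
      ≤ (25^((2*n)^2) * X * (R⁻¹)^n * (V⁻¹)^n) * (β - α) := by
    apply int_bound α β _ hαβ.le _ ((hΦsmooth n).continuous.mul hEcont)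
      (subset_trans (Function.support_mul_subset_left _ _) (hΦsupp n))
    intro t ht
    rw [Pi.mul_apply, norm_mul, hEnorm, mul_one]
    have hb := hΦbd n 0 t ht
    simpa only [iteratedDeriv_zero, Nat.add_zero] using hb
  have hkeyp : ∀ B : ℝ, 1 < B → (B⁻¹:ℝ)^n ≤ B^(-A) := by
    intro B hB
    have h1 : (B⁻¹:ℝ)^n = B^(-(n:ℝ)) := by
      rw [Real.rpow_neg (by linarith), Real.rpow_natCast, inv_pow]
    rw [h1]
    exact Real.rpow_le_rpow_of_exponent_le hB.le (by linarith)
  have hsum : (R⁻¹:ℝ)^n * (V⁻¹)^n ≤ (Q*R/sY)^(-A) + (R*U)^(-A) := by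
    have hrv : (R⁻¹:ℝ)^n * (V⁻¹)^n = ((R*V)⁻¹)^n := by
      rw [mul_inv, mul_pow]
    rcases min_cases U (Q/sY) with ⟨he, _⟩ | ⟨he, _⟩
    · have hV : V = U := by rw [hVdef, he]
      rw [hrv, hV]
      have h1 := hkeyp (R*U) hRU
      have h2 : (0:ℝ) ≤ (Q*R/sY)^(-A) := Real.rpow_nonneg hposQRY.le _
      linarith
    · have hV : V = Q / sY := by rw [hVdef, he]
      have he2 : R * V = Q*R/sY := by rw [hV]; ring
      rw [hrv, he2]
      have h1 := hkeyp (Q*R/sY) hQRY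
      have h2 : (0:ℝ) ≤ (R*U)^(-A) := Real.rpow_nonneg hposRU.le _
      linarith
  calc ‖∫ t : ℝ, Φ n t * E t‖ ≤ (25^((2*n)^2) * X * (R⁻¹)^n * (V⁻¹)^n) * (β - α) := hfinal
    _ = (25^((2*n)^2) * (β-α) * X) * ((R⁻¹)^n * (V⁻¹)^n) := by ring
    _ ≤ (25^((2*n)^2) * (β-α) * X) * ((Q*R/sY)^(-A) + (R*U)^(-A)) :=
        mul_le_mul_of_nonneg_left hsum (by positivity)
    _ = 25^((2*n)^2) * (β-α) * X * ((Q*R/sY)^(-A) + (R*U)^(-A)) := by ring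
end

section
/- For ℓ > 0 and z > 0 define g_ℓ(z) := (1/π) ∫₀^∞ e^{−ℓθ − z·sinh θ} dθ, and let T denote the Euler operator (T f)(z) := z·f′(z). Then for every integer j ≥ 0 there exists a constant C_j such that |(T^j g_ℓ)(z)| ≤ C_j / ℓ for all ℓ ≥ 1 and all z > 0. -/
open MeasureTheory

/-- The non-oscillatory part of the Bessel function:
`g_ℓ(z) = (1/π) ∫₀^∞ exp(−ℓθ − z sinh θ) dθ`. -/
noncomputable def gBessel (ℓ : ℝ) (z : ℝ) : ℝ :=
  (1 / Real.pi) * ∫ θ in Set.Ioi (0 : ℝ), Real.exp (-ℓ * θ - z * Real.sinh θ)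

/-- The Euler operator `(T f)(z) = z · f′(z)`. -/
noncomputable def eulerOp (f : ℝ → ℝ) : ℝ → ℝ := fun z => z * deriv f z

open Set Filter Polynomial Real

/-- A polynomial times `exp (-u)` is bounded on `[0, ∞)`. -/
lemma poly_exp_bound (p : ℝ[X]) :
    ∃ M : ℝ, 0 ≤ M ∧ ∀ u : ℝ, 0 ≤ u → |p.eval u| * Real.exp (-u) ≤ M := by
  have h := p.tendsto_div_exp_atTop
  have habs : Tendsto (fun u : ℝ => |p.eval u / Real.exp u|) atTop (nhds 0) := by
    simpa using h.abs
  have h1 : ∀ᶠ u : ℝ in atTop, |p.eval u / Real.exp u| < 1 :=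
    habs.eventually_lt_const (by norm_num : (0:ℝ) < 1)
  obtain ⟨N, hN⟩ := eventually_atTop.mp h1
  have hc : ContinuousOn (fun u : ℝ => |p.eval u| * Real.exp (-u)) (Icc 0 N) := by
    fun_prop
  obtain ⟨C, hC⟩ := (isCompact_Icc (a := (0:ℝ)) (b := N)).exists_bound_of_continuousOn hc
  refine ⟨max C 1, le_trans (by norm_num) (le_max_right _ _), fun u hu => ?_⟩
  rcases le_total u N with hun | hun
  · have := hC u ⟨hu, hun⟩
    calc |p.eval u| * Real.exp (-u) ≤ C := by
          have : ‖|p.eval u| * Real.exp (-u)‖ ≤ C := this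
          exact (le_abs_self _).trans (by rwa [Real.norm_eq_abs] at this)
      _ ≤ max C 1 := le_max_left _ _
  · have := (hN u hun).le
    have heq : |p.eval u| * Real.exp (-u) = |p.eval u / Real.exp u| := by
      rw [abs_div, Real.exp_neg, div_eq_mul_inv, abs_of_pos (Real.exp_pos u)]
    rw [heq]
    exact this.trans (le_max_right _ _)

/-- The integrand with a polynomial weight. -/
noncomputable def besselF (ℓ : ℝ) (p : ℝ[X]) (z θ : ℝ) : ℝ :=
  p.eval (z * Real.sinh θ) * Real.exp (-ℓ * θ - z * Real.sinh θ)

lemma besselF_cont (ℓ : ℝ) (p : ℝ[X]) (z : ℝ) : Continuous (besselF ℓ p z) := by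
  unfold besselF; fun_prop

lemma besselF_bound {ℓ : ℝ} (p : ℝ[X]) {M : ℝ}
    (hM : ∀ u : ℝ, 0 ≤ u → |p.eval u| * Real.exp (-u) ≤ M)
    {z : ℝ} (hz : 0 ≤ z) {θ : ℝ} (hθ : 0 < θ) :
    |besselF ℓ p z θ| ≤ M * Real.exp (-ℓ * θ) := by
  have hs : 0 ≤ z * Real.sinh θ := mul_nonneg hz (Real.sinh_nonneg_iff.mpr hθ.le)
  have : besselF ℓ p z θ = p.eval (z * Real.sinh θ) *
      (Real.exp (-ℓ * θ) * Real.exp (-(z * Real.sinh θ))) := by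
    rw [besselF, ← Real.exp_add]; ring_nf
  rw [this, abs_mul, abs_of_pos (by positivity : (0:ℝ) <
      Real.exp (-ℓ * θ) * Real.exp (-(z * Real.sinh θ)))]
  calc |p.eval (z * Real.sinh θ)| * (Real.exp (-ℓ * θ) * Real.exp (-(z * Real.sinh θ)))
      = (|p.eval (z * Real.sinh θ)| * Real.exp (-(z * Real.sinh θ))) * Real.exp (-ℓ * θ) := by
        ring
    _ ≤ M * Real.exp (-ℓ * θ) := by
        exact mul_le_mul_of_nonneg_right (hM _ hs) (Real.exp_pos _).le

lemma integrable_expBound {ℓ : ℝ} (hℓ : 0 < ℓ) (M : ℝ) :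
    IntegrableOn (fun θ : ℝ => M * Real.exp (-ℓ * θ)) (Ioi 0) :=
  (exp_neg_integrableOn_Ioi 0 hℓ).const_mul M

lemma integrable_besselF {ℓ : ℝ} (hℓ : 0 < ℓ) (p : ℝ[X]) {z : ℝ} (hz : 0 ≤ z) :
    IntegrableOn (besselF ℓ p z) (Ioi 0) := by
  obtain ⟨M, hM0, hM⟩ := poly_exp_bound p
  refine MeasureTheory.Integrable.mono (integrable_expBound hℓ M)
    ((besselF_cont ℓ p z).aestronglyMeasurable.restrict) ?_
  rw [ae_restrict_iff' measurableSet_Ioi]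
  filter_upwards with θ hθ
  rw [Real.norm_eq_abs, Real.norm_eq_abs]
  refine (besselF_bound p hM hz hθ).trans ?_
  exact le_abs_self _

lemma hasDerivAt_besselF_integral {ℓ : ℝ} (hℓ : 0 < ℓ) (p : ℝ[X]) {z : ℝ} (hz : 0 < z) :
    HasDerivAt (fun x => ∫ θ in Ioi (0:ℝ), besselF ℓ p x θ)
      (∫ θ in Ioi (0:ℝ), Real.sinh θ * (p.derivative - p).eval (z * Real.sinh θ) *
        Real.exp (-ℓ * θ - z * Real.sinh θ)) z := by
  set r : ℝ[X] := p.derivative - p with hr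
  obtain ⟨M, hM0, hM⟩ := poly_exp_bound (X * r)
  set F' : ℝ → ℝ → ℝ := fun x θ =>
    Real.sinh θ * r.eval (x * Real.sinh θ) * Real.exp (-ℓ * θ - x * Real.sinh θ) with hF'
  have key := hasDerivAt_integral_of_dominated_loc_of_deriv_le
    (F := fun x θ => besselF ℓ p x θ) (F' := F')
    (μ := volume.restrict (Ioi (0:ℝ))) (x₀ := z)
    (bound := fun θ => (2 / z) * M * Real.exp (-ℓ * θ))
    (s := Metric.ball z (z / 2)) (Metric.ball_mem_nhds z (by positivity))
    (Filter.Eventually.of_forall fun x => (besselF_cont ℓ p x).aestronglyMeasurable.restrict)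
    (integrable_besselF hℓ p hz.le)
    (by
      apply Continuous.aestronglyMeasurable (by unfold F'; fun_prop) |>.restrict)
    (by
      rw [ae_restrict_iff' measurableSet_Ioi]
      filter_upwards with θ hθ
      intro x hx
      have hxz : z / 2 < x := by
        have h2 : |x - z| < z / 2 := by
          simpa [Real.dist_eq] using Metric.mem_ball.mp hx
        linarith [abs_lt.mp h2 |>.1]
      have hx0 : 0 < x := lt_trans (by positivity) hxz
      have hs : 0 < Real.sinh θ := Real.sinh_pos_iff.mpr hθ
      have hu : 0 ≤ x * Real.sinh θ := by positivity
      have hMx := hM (x * Real.sinh θ) hu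
      rw [Polynomial.eval_mul, Polynomial.eval_X, abs_mul,
        abs_of_nonneg hu] at hMx
      -- ‖F' x θ‖ ≤ (2/z) * M * exp (-ℓ θ)
      have hexp : Real.exp (-ℓ * θ - x * Real.sinh θ)
          = Real.exp (-ℓ * θ) * Real.exp (-(x * Real.sinh θ)) := by
        rw [← Real.exp_add]; ring_nf
      have hxF : x * ‖F' x θ‖ ≤ M * Real.exp (-ℓ * θ) := by
        rw [hF']
        simp only [Real.norm_eq_abs]
        rw [abs_mul, abs_mul, abs_of_pos hs, abs_of_pos (Real.exp_pos _), hexp]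
        calc x * (Real.sinh θ * |r.eval (x * Real.sinh θ)| *
              (Real.exp (-ℓ * θ) * Real.exp (-(x * Real.sinh θ))))
            = (x * Real.sinh θ * |r.eval (x * Real.sinh θ)| *
                Real.exp (-(x * Real.sinh θ))) * Real.exp (-ℓ * θ) := by ring
          _ ≤ M * Real.exp (-ℓ * θ) := by
              exact mul_le_mul_of_nonneg_right hMx (Real.exp_pos _).le
      have h2x : 1 / x ≤ 2 / z := by
        rw [div_le_div_iff₀ hx0 hz]
        linarith
      calc ‖F' x θ‖ = (1 / x) * (x * ‖F' x θ‖) := by field_simp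
        _ ≤ (2 / z) * (M * Real.exp (-ℓ * θ)) := by
            apply mul_le_mul h2x hxF (by positivity) (by positivity)
        _ = 2 / z * M * Real.exp (-ℓ * θ) := by ring)
    (integrable_expBound hℓ (2 / z * M))
    (by
      filter_upwards with θ
      intro x _
      have h1 : HasDerivAt (fun x : ℝ => x * Real.sinh θ) (Real.sinh θ) x := by
        simpa using (hasDerivAt_id x).mul_const (Real.sinh θ)
      have hp : HasDerivAt (fun x : ℝ => p.eval (x * Real.sinh θ))
          (p.derivative.eval (x * Real.sinh θ) * Real.sinh θ) x :=
        by have := (p.hasDerivAt (x * Real.sinh θ)).comp x h1; exact this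
      have hin : HasDerivAt (fun x : ℝ => -ℓ * θ - x * Real.sinh θ) (-Real.sinh θ) x := by
        simpa using h1.const_sub (-ℓ * θ)
      have he : HasDerivAt (fun x : ℝ => Real.exp (-ℓ * θ - x * Real.sinh θ))
          (Real.exp (-ℓ * θ - x * Real.sinh θ) * -Real.sinh θ) x :=
        (Real.hasDerivAt_exp _).comp x hin
      have hEq : F' x θ = p.derivative.eval (x * Real.sinh θ) * Real.sinh θ *
          Real.exp (-ℓ * θ - x * Real.sinh θ) + p.eval (x * Real.sinh θ) *
          (Real.exp (-ℓ * θ - x * Real.sinh θ) * -Real.sinh θ) := by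
        simp only [hF', hr, Polynomial.eval_sub]
        ring
      show HasDerivAt (fun x => besselF ℓ p x θ) (F' x θ) x
      unfold besselF
      rw [hEq]
      exact hp.mul he)
  exact key.2

/-- The sequence of polynomials generated by the Euler operator. -/
noncomputable def besselP : ℕ → ℝ[X]
  | 0 => 1
  | (j+1) => X * ((besselP j).derivative - besselP j)

lemma euler_iterate_repr {ℓ : ℝ} (hℓ : 0 < ℓ) (j : ℕ) :
    ∀ z : ℝ, 0 < z → (eulerOp^[j] (gBessel ℓ)) z
      = (1 / Real.pi) * ∫ θ in Ioi (0:ℝ), besselF ℓ (besselP j) z θ := by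
  induction j with
  | zero =>
    intro z _
    simp [gBessel, besselF, besselP]
  | succ j ih =>
    intro z hz
    rw [Function.iterate_succ_apply']
    have heq : eulerOp^[j] (gBessel ℓ) =ᶠ[nhds z]
        (fun x => (1 / Real.pi) * ∫ θ in Ioi (0:ℝ), besselF ℓ (besselP j) x θ) := by
      filter_upwards [Ioi_mem_nhds hz] with x hx
      exact ih x hx
    have hD := (hasDerivAt_besselF_integral hℓ (besselP j) hz).const_mul (1 / Real.pi)
    simp only [eulerOp]
    rw [heq.deriv_eq, hD.deriv]
    have hstep : z * (1 / Real.pi *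
        ∫ θ in Ioi (0:ℝ), Real.sinh θ * ((besselP j).derivative - besselP j).eval
          (z * Real.sinh θ) * Real.exp (-ℓ * θ - z * Real.sinh θ))
        = 1 / Real.pi * (z * ∫ θ in Ioi (0:ℝ), Real.sinh θ *
          ((besselP j).derivative - besselP j).eval (z * Real.sinh θ) *
          Real.exp (-ℓ * θ - z * Real.sinh θ)) := by ring
    rw [hstep]
    congr 1
    rw [← MeasureTheory.integral_const_mul]
    apply MeasureTheory.setIntegral_congr_fun measurableSet_Ioi
    intro θ _
    show z * (Real.sinh θ * ((besselP j).derivative - besselP j).eval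
        (z * Real.sinh θ) * Real.exp (-ℓ * θ - z * Real.sinh θ))
      = besselF ℓ (besselP (j+1)) z θ
    rw [besselF, besselP]
    simp only [Polynomial.eval_mul, Polynomial.eval_X]
    ring

lemma integral_exp_neg_mul {ℓ : ℝ} (hℓ : 0 < ℓ) :
    (∫ θ in Ioi (0:ℝ), Real.exp (-ℓ * θ)) = 1 / ℓ := by
  have := integral_comp_mul_left_Ioi (fun x : ℝ => Real.exp (-x)) 0 hℓ
  simp only [mul_zero, smul_eq_mul] at this
  calc (∫ θ in Ioi (0:ℝ), Real.exp (-ℓ * θ))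
      = ∫ θ in Ioi (0:ℝ), Real.exp (-(ℓ * θ)) := by
        congr 1; ext θ; ring_nf
    _ = ℓ⁻¹ * ∫ x in Ioi (0:ℝ), Real.exp (-x) := this
    _ = 1 / ℓ := by rw [integral_exp_neg_Ioi_zero]; ring

/-- For every `j ≥ 0` there is `C_j` with
`|(T^j g_ℓ)(z)| ≤ C_j / ℓ` for all `ℓ ≥ 1` and `z > 0`. -/
theorem euler_iterates_bessel_tail_bound :
    ∀ j : ℕ, ∃ C : ℝ, ∀ ℓ : ℝ, 1 ≤ ℓ → ∀ z : ℝ, 0 < z →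
      |(eulerOp^[j] (gBessel ℓ)) z| ≤ C / ℓ := by
  intro j
  obtain ⟨M, hM0, hM⟩ := poly_exp_bound (besselP j)
  refine ⟨M / Real.pi, fun ℓ hℓ z hz => ?_⟩
  have hℓ0 : 0 < ℓ := lt_of_lt_of_le one_pos hℓ
  rw [euler_iterate_repr hℓ0 j z hz, abs_mul,
    abs_of_pos (by positivity : (0:ℝ) < 1 / Real.pi)]
  have hbound : |∫ θ in Ioi (0:ℝ), besselF ℓ (besselP j) z θ| ≤ M / ℓ := by
    have h1 : |∫ θ in Ioi (0:ℝ), besselF ℓ (besselP j) z θ|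
        ≤ ∫ θ in Ioi (0:ℝ), M * Real.exp (-ℓ * θ) := by
      have hn : ‖∫ θ in Ioi (0:ℝ), besselF ℓ (besselP j) z θ‖
          ≤ ∫ θ in Ioi (0:ℝ), ‖besselF ℓ (besselP j) z θ‖ :=
        MeasureTheory.norm_integral_le_integral_norm _
      rw [Real.norm_eq_abs] at hn
      refine hn.trans ?_
      apply MeasureTheory.integral_mono_of_nonneg
      · filter_upwards with θ; positivity
      · exact integrable_expBound hℓ0 M
      · rw [EventuallyLE, ae_restrict_iff' measurableSet_Ioi]
        filter_upwards with θ hθ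
        rw [Real.norm_eq_abs]
        exact besselF_bound (besselP j) hM hz.le hθ
    rw [MeasureTheory.integral_const_mul, integral_exp_neg_mul hℓ0] at h1
    calc |∫ θ in Ioi (0:ℝ), besselF ℓ (besselP j) z θ| ≤ M * (1 / ℓ) := h1
      _ = M / ℓ := by ring
  calc 1 / Real.pi * |∫ θ in Ioi (0:ℝ), besselF ℓ (besselP j) z θ|
      ≤ 1 / Real.pi * (M / ℓ) := by
        exact mul_le_mul_of_nonneg_left hbound (by positivity)
    _ = M / Real.pi / ℓ := by ring
end

section
/- Let ℓ > 0, z > 0, and let f : [0, ∞) → ℂ be a continuously differentiable function such that |f(θ)| + |f′(θ)| ≤ C(1 + θ)^M for some constants C, M and all θ ≥ 0. Then z · (d/dz) ∫₀^∞ e^{−ℓθ − z·sinh θ} f(θ) dθ = −∫₀^∞ e^{−z·sinh θ} · (d/dθ)[ e^{−ℓθ} tanh(θ) f(θ) ] dθ, where both integrals converge absolutely. -/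
open MeasureTheory Set

/-- Derivative of `Real.tanh`. -/
lemma my_hasDerivAt_tanh (x : ℝ) :
    HasDerivAt Real.tanh ((Real.cosh x ^ 2)⁻¹) x := by
  have h := ((Real.hasDerivAt_sinh x).div (Real.hasDerivAt_cosh x)
    (Real.cosh_pos x).ne')
  have : (Real.cosh x * Real.cosh x - Real.sinh x * Real.sinh x) / Real.cosh x ^ 2
      = (Real.cosh x ^ 2)⁻¹ := by
    have := Real.cosh_sq_sub_sinh_sq x
    field_simp
    nlinarith
  rw [this] at h
  exact h.congr_of_eventuallyEq (Filter.Eventually.of_forall fun y =>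
    (Real.tanh_eq_sinh_div_cosh y))

lemma my_abs_tanh_le_one (x : ℝ) : |Real.tanh x| ≤ 1 := by
  rw [Real.tanh_eq_sinh_div_cosh, abs_div, abs_of_pos (Real.cosh_pos x),
    div_le_one (Real.cosh_pos x)]
  have h := Real.cosh_sq_sub_sinh_sq x
  have := Real.cosh_pos x
  nlinarith [abs_nonneg (Real.sinh x), sq_abs (Real.sinh x)]

@[fun_prop] lemma my_continuous_tanh : Continuous Real.tanh := by
  have : Real.tanh = fun x => Real.sinh x / Real.cosh x :=
    funext Real.tanh_eq_sinh_div_cosh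
  rw [this]
  exact Real.continuous_sinh.div Real.continuous_cosh fun x => (Real.cosh_pos x).ne'

lemma my_mul_exp_le (c y : ℝ) (hc : 0 < c) (hy : 0 ≤ y) :
    y * Real.exp (-(c * y)) ≤ 1 / c := by
  have h1 : c * y ≤ Real.exp (c * y) :=
    le_trans (by linarith) (Real.add_one_le_exp (c * y))
  have h2 : Real.exp (c * y) * Real.exp (-(c * y)) = 1 := by
    rw [← Real.exp_add]; simp
  rw [le_div_iff₀ hc]
  nlinarith [Real.exp_pos (-(c * y)), mul_le_mul_of_nonneg_right h1 (Real.exp_pos (-(c*y))).le]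

lemma my_poly_exp_tendsto (a C M : ℝ) (ha : 0 < a) :
    Filter.Tendsto (fun θ : ℝ => C * (1 + θ) ^ M * Real.exp (-a * θ))
      Filter.atTop (nhds 0) := by
  have h1 : Filter.Tendsto (fun y : ℝ => y ^ M * Real.exp (-a * y))
      Filter.atTop (nhds 0) :=
    tendsto_rpow_mul_exp_neg_mul_atTop_nhds_zero M a ha
  have h2 : Filter.Tendsto (fun θ : ℝ => (1:ℝ) + θ) Filter.atTop Filter.atTop :=
    Filter.tendsto_atTop_add_const_left _ 1 Filter.tendsto_id
  have h3 := (h1.comp h2).const_mul (C * Real.exp a)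
  simp only [mul_zero] at h3
  refine h3.congr fun θ => ?_
  simp only [Function.comp]
  have he : Real.exp a * Real.exp (-a * (1 + θ)) = Real.exp (-a * θ) := by
    rw [← Real.exp_add]; congr 1; ring
  rw [← he]; ring

/-- Polynomial times decaying exponential: uniform bound. -/
lemma my_poly_exp_bound (a C M : ℝ) (ha : 0 < a) :
    ∃ K : ℝ, 0 ≤ K ∧ ∀ θ : ℝ, 0 ≤ θ →
      C * (1 + θ) ^ M * Real.exp (-a * θ) ≤ K * Real.exp (-(a/2) * θ) := by
  set φ : ℝ → ℝ := fun θ => C * (1 + θ) ^ M * Real.exp (-(a/2) * θ) with hφ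
  have htends : Filter.Tendsto φ Filter.atTop (nhds 0) :=
    my_poly_exp_tendsto (a/2) C M (by linarith)
  obtain ⟨T, hT⟩ := (Filter.eventually_atTop).1 (htends.eventually
    (eventually_le_nhds (by norm_num : (0:ℝ) < 1)))
  have hcont : ContinuousOn φ (Icc 0 (max T 0)) := by
    apply ContinuousOn.mul
    · apply ContinuousOn.mul continuousOn_const
      apply ContinuousOn.rpow_const (by fun_prop)
      intro x hx
      left
      have := hx.1
      intro h
      linarith
    · fun_prop
  obtain ⟨K₀, hK₀⟩ := (isCompact_Icc).exists_bound_of_continuousOn hcont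
  refine ⟨max K₀ 1, le_trans zero_le_one (le_max_right _ _), fun θ hθ => ?_⟩
  have hexp : Real.exp (-a * θ) = Real.exp (-(a/2) * θ) * Real.exp (-(a/2) * θ) := by
    rw [← Real.exp_add]; ring_nf
  have key : φ θ ≤ max K₀ 1 := by
    rcases le_total θ (max T 0) with h | h
    · exact le_trans (le_trans (le_abs_self _) (hK₀ θ ⟨hθ, h⟩)) (le_max_left _ _)
    · exact le_trans (hT θ (le_trans (le_max_left T 0) h)) (le_max_right _ _)
  calc C * (1 + θ) ^ M * Real.exp (-a * θ)
      = φ θ * Real.exp (-(a/2) * θ) := by rw [hexp]; ring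
    _ ≤ max K₀ 1 * Real.exp (-(a/2) * θ) :=
        mul_le_mul_of_nonneg_right key (Real.exp_pos _).le

/-- Master integrability lemma. -/
lemma my_integrable_master {E : Type*} [NormedAddCommGroup E] (a C M : ℝ) (ha : 0 < a)
    {F : ℝ → E} (hF : AEStronglyMeasurable F (volume.restrict (Ioi 0)))
    (hb : ∀ θ : ℝ, θ ∈ Ioi (0:ℝ) → ‖F θ‖ ≤ C * (1 + θ) ^ M * Real.exp (-a * θ)) :
    IntegrableOn F (Ioi 0) := by
  obtain ⟨K, _, hKb⟩ := my_poly_exp_bound a C M ha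
  refine Integrable.mono' ((exp_neg_integrableOn_Ioi 0 (by linarith : 0 < a/2)).const_mul K)
    hF ?_
  rw [ae_restrict_iff' measurableSet_Ioi]
  exact Filter.Eventually.of_forall fun θ hθ =>
    le_trans (hb θ hθ) (hKb θ (le_of_lt hθ))


/-- For `ℓ, z > 0` and a continuously differentiable `f` of polynomial
growth on `[0,∞)`,
`z·(d/dz) ∫₀^∞ e^{−ℓθ − z sinh θ} f(θ) dθ
  = −∫₀^∞ e^{−z sinh θ} (d/dθ)[e^{−ℓθ} tanh(θ) f(θ)] dθ`,
both integrals converging absolutely. -/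
theorem euler_operator_integration_by_parts
    (ℓ z : ℝ) (hℓ : 0 < ℓ) (hz : 0 < z)
    (f : ℝ → ℂ) (hf : ContDiff ℝ 1 f)
    (C M : ℝ) (hgrowth : ∀ θ : ℝ, 0 ≤ θ → ‖f θ‖ + ‖deriv f θ‖ ≤ C * (1 + θ) ^ M) :
    IntegrableOn (fun θ : ℝ => (Real.exp (-ℓ * θ - z * Real.sinh θ) : ℂ) * f θ)
        (Set.Ioi 0) ∧
    IntegrableOn (fun θ : ℝ => (Real.exp (-(z * Real.sinh θ)) : ℂ) *
        deriv (fun θ' : ℝ => ((Real.exp (-ℓ * θ') * Real.tanh θ' : ℝ) : ℂ) * f θ') θ)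
        (Set.Ioi 0) ∧
    z * deriv (fun w : ℝ => ∫ θ in Set.Ioi (0 : ℝ),
          (Real.exp (-ℓ * θ - w * Real.sinh θ) : ℂ) * f θ) z
      = -∫ θ in Set.Ioi (0 : ℝ), (Real.exp (-(z * Real.sinh θ)) : ℂ) *
          deriv (fun θ' : ℝ => ((Real.exp (-ℓ * θ') * Real.tanh θ' : ℝ) : ℂ) * f θ') θ := by
  have hC : 0 ≤ C := by
    have h0 := hgrowth 0 le_rfl
    simp only [add_zero, Real.one_rpow, mul_one] at h0
    nlinarith [norm_nonneg (f 0), norm_nonneg (deriv f 0)]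
  have hfd : Differentiable ℝ f := hf.differentiable one_ne_zero
  have hfc : Continuous f := hf.continuous
  have hf'c : Continuous (deriv f) := hf.continuous_deriv le_rfl
  -- the function h and its derivative
  set h : ℝ → ℝ := fun θ => Real.exp (-ℓ * θ) * Real.tanh θ with hh_def
  set h' : ℝ → ℝ := fun θ =>
    -ℓ * Real.exp (-ℓ * θ) * Real.tanh θ + Real.exp (-ℓ * θ) * (Real.cosh θ ^ 2)⁻¹ with hh'_def
  have hexp : ∀ θ : ℝ, HasDerivAt (fun t => Real.exp (-ℓ * t)) (-ℓ * Real.exp (-ℓ * θ)) θ := by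
    intro θ
    have := ((hasDerivAt_id θ).const_mul (-ℓ)).exp
    simpa [mul_comm] using this
  have hh : ∀ θ : ℝ, HasDerivAt h (h' θ) θ := by
    intro θ
    have := (hexp θ).mul (my_hasDerivAt_tanh θ)
    exact this
  have hh'_bound : ∀ θ : ℝ, |h' θ| ≤ (ℓ + 1) * Real.exp (-ℓ * θ) := by
    intro θ
    have h1 : |(-ℓ) * Real.exp (-ℓ * θ) * Real.tanh θ| ≤ ℓ * Real.exp (-ℓ * θ) := by
      rw [abs_mul, abs_mul, abs_neg, abs_of_pos hℓ, abs_of_pos (Real.exp_pos _)]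
      have h := my_abs_tanh_le_one θ
      have h0 : 0 ≤ ℓ * Real.exp (-ℓ * θ) := by positivity
      nlinarith [mul_le_mul_of_nonneg_left h h0]
    have h2 : |Real.exp (-ℓ * θ) * (Real.cosh θ ^ 2)⁻¹| ≤ Real.exp (-ℓ * θ) := by
      rw [abs_mul, abs_of_pos (Real.exp_pos _)]
      have hc := Real.one_le_cosh θ
      have : (Real.cosh θ ^ 2)⁻¹ ≤ 1 := by
        rw [inv_le_one_iff₀]
        right; nlinarith
      rw [abs_of_pos (by positivity)]
      nlinarith [Real.exp_pos (-ℓ * θ)]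
    calc |h' θ| ≤ |(-ℓ) * Real.exp (-ℓ * θ) * Real.tanh θ|
          + |Real.exp (-ℓ * θ) * (Real.cosh θ ^ 2)⁻¹| := by
          simp only [hh'_def]; exact abs_add_le _ _
      _ ≤ ℓ * Real.exp (-ℓ * θ) + Real.exp (-ℓ * θ) := add_le_add h1 h2
      _ = (ℓ + 1) * Real.exp (-ℓ * θ) := by ring
  have hh_bound : ∀ θ : ℝ, |h θ| ≤ Real.exp (-ℓ * θ) := by
    intro θ
    rw [hh_def]
    simp only
    rw [abs_mul, abs_of_pos (Real.exp_pos _)]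
    nlinarith [my_abs_tanh_le_one θ, Real.exp_pos (-ℓ * θ), abs_nonneg (Real.tanh θ)]
  -- complex-valued g and its derivative G
  set g : ℝ → ℂ := fun θ => ((Real.exp (-ℓ * θ) * Real.tanh θ : ℝ) : ℂ) * f θ with hg_def
  set G : ℝ → ℂ := fun θ => (h' θ : ℂ) * f θ + ((h θ : ℝ) : ℂ) * deriv f θ with hG_def
  have hG : ∀ θ : ℝ, HasDerivAt
      (fun θ' : ℝ => ((Real.exp (-ℓ * θ') * Real.tanh θ' : ℝ) : ℂ) * f θ') (G θ) θ := by
    intro θ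
    exact ((hh θ).ofReal_comp).mul (hfd θ).hasDerivAt
  have hGcont : Continuous G := by
    have hc1 : Continuous h' := by
      apply Continuous.add
      · fun_prop
      · apply Continuous.mul (by fun_prop)
        exact (Real.continuous_cosh.pow 2).inv₀ fun x => (pow_pos (Real.cosh_pos x) 2).ne'
    have hc2 : Continuous h := by fun_prop
    exact ((Complex.continuous_ofReal.comp hc1).mul hfc).add
      ((Complex.continuous_ofReal.comp hc2).mul hf'c)
  have hG_bound : ∀ θ : ℝ, 0 ≤ θ → ‖G θ‖ ≤ ((ℓ + 1) * C) * (1 + θ) ^ M * Real.exp (-ℓ * θ) := by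
    intro θ hθ
    have hgr := hgrowth θ hθ
    have h1 : ‖(h' θ : ℂ) * f θ‖ ≤ (ℓ + 1) * Real.exp (-ℓ * θ) * ‖f θ‖ := by
      rw [norm_mul, Complex.norm_real, Real.norm_eq_abs]
      exact mul_le_mul_of_nonneg_right (hh'_bound θ) (norm_nonneg _)
    have h2 : ‖((h θ : ℝ) : ℂ) * deriv f θ‖ ≤ (ℓ + 1) * Real.exp (-ℓ * θ) * ‖deriv f θ‖ := by
      rw [norm_mul, Complex.norm_real, Real.norm_eq_abs]
      refine mul_le_mul_of_nonneg_right (le_trans (hh_bound θ) ?_) (norm_nonneg _)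
      nlinarith [Real.exp_pos (-ℓ * θ)]
    calc ‖G θ‖ ≤ ‖(h' θ : ℂ) * f θ‖ + ‖((h θ : ℝ) : ℂ) * deriv f θ‖ := norm_add_le _ _
      _ ≤ (ℓ + 1) * Real.exp (-ℓ * θ) * (‖f θ‖ + ‖deriv f θ‖) := by
          rw [mul_add]; exact add_le_add h1 h2
      _ ≤ (ℓ + 1) * Real.exp (-ℓ * θ) * (C * (1 + θ) ^ M) := by
          refine mul_le_mul_of_nonneg_left hgr (by positivity)
      _ = ((ℓ + 1) * C) * (1 + θ) ^ M * Real.exp (-ℓ * θ) := by ring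
  -- u and u'
  set u : ℝ → ℂ := fun θ => ((Real.exp (-(z * Real.sinh θ)) : ℝ) : ℂ) with hu_def
  set u' : ℝ → ℂ := fun θ =>
    ((-(z * Real.cosh θ) * Real.exp (-(z * Real.sinh θ)) : ℝ) : ℂ) with hu'_def
  have hu : ∀ θ : ℝ, HasDerivAt u (u' θ) θ := by
    intro θ
    have h1 : HasDerivAt (fun t : ℝ => Real.exp (-(z * Real.sinh t)))
        (-(z * Real.cosh θ) * Real.exp (-(z * Real.sinh θ))) θ := by
      have := (((Real.hasDerivAt_sinh θ).const_mul z).neg).exp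
      simpa [mul_comm] using this
    exact h1.ofReal_comp
  -- part 1 : integrability of the first integrand
  have haesm1 : ∀ w : ℝ, AEStronglyMeasurable
      (fun θ : ℝ => (Real.exp (-ℓ * θ - w * Real.sinh θ) : ℂ) * f θ)
      (volume.restrict (Ioi 0)) := by
    intro w
    exact (Continuous.aestronglyMeasurable (by fun_prop))
  have hpart1 : IntegrableOn
      (fun θ : ℝ => (Real.exp (-ℓ * θ - z * Real.sinh θ) : ℂ) * f θ) (Ioi 0) := by
    refine my_integrable_master ℓ C M hℓ (haesm1 z) fun θ hθ => ?_
    have hθ0 : (0:ℝ) ≤ θ := le_of_lt hθ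
    rw [norm_mul, Complex.norm_real, Real.norm_eq_abs, abs_of_pos (Real.exp_pos _)]
    have h1 : Real.exp (-ℓ * θ - z * Real.sinh θ) ≤ Real.exp (-ℓ * θ) := by
      apply Real.exp_le_exp.2
      have := Real.sinh_nonneg_iff.2 hθ0
      nlinarith
    have h2 : ‖f θ‖ ≤ C * (1 + θ) ^ M := by
      nlinarith [hgrowth θ hθ0, norm_nonneg (deriv f θ)]
    calc Real.exp (-ℓ * θ - z * Real.sinh θ) * ‖f θ‖
        ≤ Real.exp (-ℓ * θ) * (C * (1 + θ) ^ M) := by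
          apply mul_le_mul h1 h2 (norm_nonneg _) (Real.exp_pos _).le
      _ = C * (1 + θ) ^ M * Real.exp (-ℓ * θ) := by ring
  -- part 2 : integrability of the second integrand
  have huG : IntegrableOn (fun θ : ℝ => u θ * G θ) (Ioi 0) := by
    refine my_integrable_master ℓ ((ℓ + 1) * C) M hℓ
      (Continuous.aestronglyMeasurable ((Complex.continuous_ofReal.comp
        (by fun_prop)).mul hGcont)) fun θ hθ => ?_
    have hθ0 : (0:ℝ) ≤ θ := le_of_lt hθ
    rw [norm_mul]
    have h1 : ‖u θ‖ ≤ 1 := by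
      rw [hu_def]
      simp only [Complex.norm_real, Real.norm_eq_abs, abs_of_pos (Real.exp_pos _)]
      rw [Real.exp_le_one_iff]
      have := Real.sinh_nonneg_iff.2 hθ0
      nlinarith
    calc ‖u θ‖ * ‖G θ‖ ≤ 1 * (((ℓ + 1) * C) * (1 + θ) ^ M * Real.exp (-ℓ * θ)) :=
          mul_le_mul h1 (hG_bound θ hθ0) (norm_nonneg _) zero_le_one
      _ = ((ℓ + 1) * C) * (1 + θ) ^ M * Real.exp (-ℓ * θ) := one_mul _
  have hrw2 : (fun θ : ℝ => (Real.exp (-(z * Real.sinh θ)) : ℂ) *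
      deriv (fun θ' : ℝ => ((Real.exp (-ℓ * θ') * Real.tanh θ' : ℝ) : ℂ) * f θ') θ)
      = fun θ : ℝ => u θ * G θ := funext fun θ => by rw [(hG θ).deriv]
  refine ⟨hpart1, by rw [hrw2]; exact huG, ?_⟩
  -- differentiation under the integral sign
  set F' : ℝ → ℝ → ℂ := fun w θ =>
    ((-Real.sinh θ * Real.exp (-ℓ * θ - w * Real.sinh θ) : ℝ) : ℂ) * f θ with hF'_def
  have hder : HasDerivAt (fun w : ℝ => ∫ θ in Set.Ioi (0 : ℝ),
      (Real.exp (-ℓ * θ - w * Real.sinh θ) : ℂ) * f θ)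
      (∫ θ in Set.Ioi (0 : ℝ), F' z θ) z := by
    have key := hasDerivAt_integral_of_dominated_loc_of_deriv_le
      (μ := volume.restrict (Ioi 0)) (x₀ := z)
      (F := fun w θ => (Real.exp (-ℓ * θ - w * Real.sinh θ) : ℂ) * f θ)
      (F' := F') (bound := fun θ => (2 / z) * (C * (1 + θ) ^ M * Real.exp (-ℓ * θ)))
      (Metric.ball_mem_nhds z (half_pos hz)) (Filter.Eventually.of_forall haesm1) hpart1
      (Continuous.aestronglyMeasurable (by fun_prop)) ?_ ?_ ?_
    · exact key.2
    · -- bound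
      rw [ae_restrict_iff' measurableSet_Ioi]
      refine Filter.Eventually.of_forall fun θ hθ w hw => ?_
      have hθ0 : (0:ℝ) ≤ θ := le_of_lt hθ
      have hsθ : 0 ≤ Real.sinh θ := Real.sinh_nonneg_iff.2 hθ0
      have hw2 : z / 2 ≤ w := by
        rw [Metric.mem_ball, Real.dist_eq, abs_lt] at hw
        linarith [hw.1]
      have hfb : ‖f θ‖ ≤ C * (1 + θ) ^ M := by
        nlinarith [hgrowth θ hθ0, norm_nonneg (deriv f θ)]
      rw [hF'_def]
      simp only
      rw [norm_mul, Complex.norm_real, Real.norm_eq_abs, abs_mul, abs_neg, abs_of_nonneg hsθ,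
        abs_of_pos (Real.exp_pos _)]
      have he : Real.exp (-ℓ * θ - w * Real.sinh θ)
          ≤ Real.exp (-(z/2 * Real.sinh θ)) * Real.exp (-ℓ * θ) := by
        rw [← Real.exp_add]
        apply Real.exp_le_exp.2
        nlinarith
      have hkey : Real.sinh θ * Real.exp (-(z/2 * Real.sinh θ)) ≤ 2 / z := by
        have := my_mul_exp_le (z/2) (Real.sinh θ) (half_pos hz) hsθ
        calc Real.sinh θ * Real.exp (-(z/2 * Real.sinh θ)) ≤ 1 / (z/2) := this
          _ = 2 / z := by field_simp
      calc Real.sinh θ * Real.exp (-ℓ * θ - w * Real.sinh θ) * ‖f θ‖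
          ≤ Real.sinh θ * (Real.exp (-(z/2 * Real.sinh θ)) * Real.exp (-ℓ * θ))
            * (C * (1 + θ) ^ M) := by
            apply mul_le_mul (mul_le_mul_of_nonneg_left he hsθ) hfb (norm_nonneg _)
            positivity
        _ = (Real.sinh θ * Real.exp (-(z/2 * Real.sinh θ)))
            * (C * (1 + θ) ^ M * Real.exp (-ℓ * θ)) := by ring
        _ ≤ (2 / z) * (C * (1 + θ) ^ M * Real.exp (-ℓ * θ)) := by
            apply mul_le_mul_of_nonneg_right hkey (by positivity)
    · -- bound integrable
      have hcb : ContinuousOn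
          (fun θ : ℝ => (2 / z) * (C * (1 + θ) ^ M * Real.exp (-ℓ * θ))) (Ioi 0) := by
        apply ContinuousOn.mul continuousOn_const
        apply ContinuousOn.mul (ContinuousOn.mul continuousOn_const ?_) (by fun_prop)
        apply ContinuousOn.rpow_const (by fun_prop)
        intro x hx
        left
        have : (0:ℝ) < x := hx
        intro hcon; linarith
      refine (my_integrable_master ℓ ((2/z) * C) M hℓ
        (hcb.aestronglyMeasurable measurableSet_Ioi) fun θ hθ => ?_)
      have hθ0 : (0:ℝ) ≤ θ := le_of_lt hθ
      rw [Real.norm_eq_abs, abs_of_nonneg (by positivity)]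
      apply le_of_eq; ring
    · -- differentiability in w
      refine Filter.Eventually.of_forall fun θ w _ => ?_
      have h1 : HasDerivAt (fun w : ℝ => -ℓ * θ - w * Real.sinh θ) (-Real.sinh θ) w := by
        exact (((hasDerivAt_id w).mul_const (Real.sinh θ)).const_sub (-ℓ * θ)).congr_deriv
          (by ring)
      have h2 := (h1.exp).ofReal_comp.mul_const (f θ)
      rw [hF'_def]
      simp only
      refine h2.congr_deriv ?_
      push_cast
      ring
  rw [hder.deriv]
  -- integration by parts
  have ht0 : Filter.Tendsto (u * g) (nhdsWithin 0 (Ioi 0)) (nhds 0) := by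
    have hcont : Continuous (fun θ => u θ * g θ) := by
      apply Continuous.mul
      · fun_prop
      · exact (Complex.continuous_ofReal.comp (by fun_prop)).mul hfc
    have hval : u 0 * g 0 = 0 := by
      simp [hu_def, hg_def, Real.tanh_zero]
    have h2 : Filter.Tendsto (fun θ => u θ * g θ) (nhdsWithin 0 (Ioi 0))
        (nhds (u 0 * g 0)) := (hcont.tendsto 0).mono_left nhdsWithin_le_nhds
    rw [hval] at h2
    exact h2
  have htinf : Filter.Tendsto (u * g) Filter.atTop (nhds 0) := by
    refine squeeze_zero_norm' ?_ (my_poly_exp_tendsto ℓ C M hℓ)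
    filter_upwards [Filter.eventually_ge_atTop (0:ℝ)] with θ hθ
    have hsθ : 0 ≤ Real.sinh θ := Real.sinh_nonneg_iff.2 hθ
    have hfb : ‖f θ‖ ≤ C * (1 + θ) ^ M := by
      nlinarith [hgrowth θ hθ, norm_nonneg (deriv f θ)]
    have h1 : ‖u θ‖ ≤ 1 := by
      simp only [hu_def, Complex.norm_real, Real.norm_eq_abs, abs_of_pos (Real.exp_pos _)]
      rw [Real.exp_le_one_iff]; nlinarith
    have h2 : ‖g θ‖ ≤ Real.exp (-ℓ * θ) * ‖f θ‖ := by
      rw [hg_def]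
      simp only [norm_mul, Complex.norm_real, Real.norm_eq_abs]
      apply mul_le_mul_of_nonneg_right _ (norm_nonneg _)
      calc |Real.exp (-ℓ * θ)| * |Real.tanh θ| = |h θ| := by
            rw [hh_def]; simp only [abs_mul]
        _ ≤ Real.exp (-ℓ * θ) := hh_bound θ
    calc ‖(u * g) θ‖ = ‖u θ‖ * ‖g θ‖ := by simp [norm_mul]
      _ ≤ 1 * (Real.exp (-ℓ * θ) * ‖f θ‖) :=
          mul_le_mul h1 h2 (norm_nonneg _) zero_le_one
      _ = Real.exp (-ℓ * θ) * ‖f θ‖ := one_mul _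
      _ ≤ Real.exp (-ℓ * θ) * (C * (1 + θ) ^ M) :=
          mul_le_mul_of_nonneg_left hfb (Real.exp_pos _).le
      _ = C * (1 + θ) ^ M * Real.exp (-ℓ * θ) := by ring
  have hu'g : IntegrableOn (fun θ : ℝ => u' θ * g θ) (Ioi 0) := by
    refine my_integrable_master ℓ ((z + 1) * C) M hℓ
      (Continuous.aestronglyMeasurable ?_) fun θ hθ => ?_
    · apply Continuous.mul
      · exact Complex.continuous_ofReal.comp (by fun_prop)
      · exact (Complex.continuous_ofReal.comp (by fun_prop)).mul hfc
    · have hθ0 : (0:ℝ) ≤ θ := le_of_lt hθ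
      have hsθ : 0 ≤ Real.sinh θ := Real.sinh_nonneg_iff.2 hθ0
      have hcθ := Real.one_le_cosh θ
      have hcs : Real.cosh θ ≤ 1 + Real.sinh θ := by
        nlinarith [Real.cosh_sq_sub_sinh_sq θ, Real.cosh_pos θ]
      have hfb : ‖f θ‖ ≤ C * (1 + θ) ^ M := by
        nlinarith [hgrowth θ hθ0, norm_nonneg (deriv f θ)]
      have hbd : z * Real.cosh θ * Real.exp (-(z * Real.sinh θ)) ≤ z + 1 := by
        have hkey := my_mul_exp_le z (Real.sinh θ) hz hsθ
        have he1 : Real.exp (-(z * Real.sinh θ)) ≤ 1 := by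
          rw [Real.exp_le_one_iff]; nlinarith
        have hep := Real.exp_pos (-(z * Real.sinh θ))
        calc z * Real.cosh θ * Real.exp (-(z * Real.sinh θ))
            ≤ z * (1 + Real.sinh θ) * Real.exp (-(z * Real.sinh θ)) := by
              apply mul_le_mul_of_nonneg_right _ hep.le
              nlinarith
          _ = z * Real.exp (-(z * Real.sinh θ))
              + z * (Real.sinh θ * Real.exp (-(z * Real.sinh θ))) := by ring
          _ ≤ z * 1 + z * (1 / z) := by
              apply add_le_add
              · nlinarith
              · exact mul_le_mul_of_nonneg_left hkey hz.le
          _ = z + 1 := by field_simp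
      rw [norm_mul]
      have h1 : ‖u' θ‖ ≤ z * Real.cosh θ * Real.exp (-(z * Real.sinh θ)) := by
        simp only [hu'_def, Complex.norm_real, Real.norm_eq_abs]
        rw [abs_mul, abs_neg, abs_of_pos (by positivity : 0 < z * Real.cosh θ),
          abs_of_pos (Real.exp_pos _)]
      have h2 : ‖g θ‖ ≤ Real.exp (-ℓ * θ) * ‖f θ‖ := by
        rw [hg_def]
        simp only [norm_mul, Complex.norm_real, Real.norm_eq_abs]
        apply mul_le_mul_of_nonneg_right _ (norm_nonneg _)
        calc |Real.exp (-ℓ * θ)| * |Real.tanh θ| = |h θ| := by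
              rw [hh_def]; simp only [abs_mul]
          _ ≤ Real.exp (-ℓ * θ) := hh_bound θ
      calc ‖u' θ‖ * ‖g θ‖
          ≤ (z + 1) * (Real.exp (-ℓ * θ) * ‖f θ‖) := by
            apply mul_le_mul (le_trans h1 hbd) h2 (norm_nonneg _) (by positivity)
        _ ≤ (z + 1) * (Real.exp (-ℓ * θ) * (C * (1 + θ) ^ M)) := by
            apply mul_le_mul_of_nonneg_left _ (by positivity)
            exact mul_le_mul_of_nonneg_left hfb (Real.exp_pos _).le
        _ = ((z + 1) * C) * (1 + θ) ^ M * Real.exp (-ℓ * θ) := by ring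
  have hibp := integral_Ioi_mul_deriv_eq_deriv_mul (a := (0:ℝ))
    (u := u) (v := g) (u' := u') (v' := G)
    (fun x _ => hu x) (fun x _ => hG x) huG hu'g ht0 htinf
  -- hibp : ∫ x in Ioi 0, u x * G x = 0 - 0 - ∫ x in Ioi 0, u' x * g x
  rw [hrw2]
  rw [hibp]
  -- goal : ↑z * ∫ F' z = -(0 - 0 - ∫ u' g)
  have hpoint : ∀ θ : ℝ, (z : ℂ) * F' z θ = u' θ * g θ := by
    intro θ
    have ht : Real.cosh θ * Real.tanh θ = Real.sinh θ := by
      rw [Real.tanh_eq_sinh_div_cosh]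
      field_simp
    have he : Real.exp (-ℓ * θ - z * Real.sinh θ)
        = Real.exp (-(z * Real.sinh θ)) * Real.exp (-ℓ * θ) := by
      rw [← Real.exp_add]; ring_nf
    have hr : z * (-Real.sinh θ * Real.exp (-ℓ * θ - z * Real.sinh θ))
        = (-(z * Real.cosh θ) * Real.exp (-(z * Real.sinh θ)))
          * (Real.exp (-ℓ * θ) * Real.tanh θ) := by
      rw [he, ← ht]; ring
    rw [hF'_def, hu'_def, hg_def]
    simp only
    calc (z : ℂ) * (((-Real.sinh θ * Real.exp (-ℓ * θ - z * Real.sinh θ) : ℝ) : ℂ) * f θ)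
        = ((z * (-Real.sinh θ * Real.exp (-ℓ * θ - z * Real.sinh θ)) : ℝ) : ℂ) * f θ := by
          push_cast; ring
      _ = ((-(z * Real.cosh θ) * Real.exp (-(z * Real.sinh θ)) : ℝ) : ℂ)
          * (((Real.exp (-ℓ * θ) * Real.tanh θ : ℝ) : ℂ) * f θ) := by
          rw [hr]; push_cast; ring
  rw [← integral_const_mul]
  rw [integral_congr_ae (Filter.Eventually.of_forall fun θ => hpoint θ)]
  ring
end

section
/- For z > 0 define E₂(z) := −(1/2) ∫₀^{∞} e(−t/z) (1+t)^{−1/2} dt, where the integral is an improper Riemann integral. Then E₂ is smooth on (0, ∞), and for every integer n ≥ 0 there is a constant C_n such that |E₂^{(n)}(z)| ≤ C_n · z^{1−n} for all 0 < z ≤ 1. -/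
open MeasureTheory intervalIntegral Filter

/-- `e(x) = exp(2πix)`. -/
noncomputable def e (x : ℝ) : ℂ := Complex.exp (2 * Real.pi * Complex.I * x)

lemma norm_e (x : ℝ) : ‖e x‖ = 1 := by
  simp [e, Complex.norm_exp]

/-- The auxiliary kernel integrals. -/
noncomputable def K (n : ℕ) (z : ℝ) : ℂ :=
  ∫ s in Set.Ioi (0:ℝ), e (-s) * ((s ^ n * (1 + z * s) ^ (-(n:ℝ) - 3/2) : ℝ) : ℂ)

lemma core_cont {z : ℝ} (hz : 0 < z) (n : ℕ) (c : ℝ) :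
    ContinuousOn (fun s : ℝ => s ^ n * (1 + z * s) ^ c) (Set.Ici 0) := by
  apply ContinuousOn.mul (by fun_prop)
  apply ContinuousOn.rpow_const (by fun_prop)
  intro s hs
  left
  have : (0:ℝ) ≤ s := hs
  positivity

lemma integrable_core {z : ℝ} (hz : 0 < z) (n : ℕ) :
    IntegrableOn (fun s : ℝ => s ^ n * (1 + z * s) ^ (-(n:ℝ) - 3/2)) (Set.Ioi 0) := by
  have hIcc : Set.Icc (0:ℝ) 1 ⊆ Set.Ici 0 := fun x hx => hx.1
  have h1 : IntegrableOn (fun s : ℝ => s ^ n * (1 + z * s) ^ (-(n:ℝ) - 3/2)) (Set.Ioc 0 1) :=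
    (((core_cont hz n _).mono hIcc).integrableOn_Icc).mono_set Set.Ioc_subset_Icc_self
  have h2 : IntegrableOn (fun s : ℝ => s ^ n * (1 + z * s) ^ (-(n:ℝ) - 3/2)) (Set.Ioi 1) := by
    have hg : IntegrableOn (fun s : ℝ => z ^ (-(n:ℝ) - 3/2) * s ^ (-3/2 : ℝ)) (Set.Ioi 1) :=
      (integrableOn_Ioi_rpow_of_lt (by norm_num) one_pos).const_mul _
    apply Integrable.mono' hg
    · exact ((core_cont hz n _).mono (fun x (hx : x ∈ Set.Ioi (1:ℝ)) =>
        Set.mem_Ici.mpr (le_trans zero_le_one (le_of_lt hx)))).aestronglyMeasurable measurableSet_Ioi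
    · filter_upwards [ae_restrict_mem measurableSet_Ioi] with s (hs : 1 < s)
      have hs0 : 0 < s := lt_trans one_pos hs
      have hb : (1 + z * s) ^ (-(n:ℝ) - 3/2) ≤ (z * s) ^ (-(n:ℝ) - 3/2) := by
        have hn0 : (0:ℝ) ≤ (n:ℝ) := Nat.cast_nonneg n
        exact Real.rpow_le_rpow_of_nonpos (by positivity) (by linarith) (by linarith)
      have habs : |s ^ n * (1 + z * s) ^ (-(n:ℝ) - 3/2)| = s ^ n * (1 + z*s) ^ (-(n:ℝ)-3/2) :=
        abs_of_nonneg (by positivity)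
      rw [Real.norm_eq_abs, habs]
      calc s ^ n * (1 + z * s) ^ (-(n:ℝ) - 3/2)
          ≤ s ^ n * (z * s) ^ (-(n:ℝ) - 3/2) :=
            mul_le_mul_of_nonneg_left hb (by positivity)
        _ = z ^ (-(n:ℝ)-3/2) * (s ^ (n:ℝ) * s ^ (-(n:ℝ)-3/2)) := by
            rw [Real.mul_rpow hz.le hs0.le, Real.rpow_natCast]; ring
        _ = z ^ (-(n:ℝ)-3/2) * s ^ (-3/2:ℝ) := by
            rw [← Real.rpow_add hs0, show (n:ℝ) + (-(n:ℝ)-3/2) = (-3/2:ℝ) by ring]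
  simpa [Set.Ioc_union_Ioi_eq_Ioi (le_of_lt one_pos)] using h1.union h2

lemma e_cont : Continuous e := by
  unfold e; fun_prop

lemma cont_Kint {z : ℝ} (hz : 0 < z) (n : ℕ) (c : ℝ) :
    ContinuousOn (fun s : ℝ => e (-s) * ((s ^ n * (1 + z * s) ^ c : ℝ) : ℂ)) (Set.Ici 0) := by
  apply ContinuousOn.mul ((e_cont.comp continuous_neg).continuousOn)
  exact Complex.continuous_ofReal.comp_continuousOn (core_cont hz n c)

lemma meas_Kint {z : ℝ} (hz : 0 < z) (n : ℕ) (c : ℝ) :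
    AEStronglyMeasurable (fun s : ℝ => e (-s) * ((s ^ n * (1 + z * s) ^ c : ℝ) : ℂ))
      (volume.restrict (Set.Ioi 0)) :=
  ((cont_Kint hz n c).mono (Set.Ioi_subset_Ici le_rfl)).aestronglyMeasurable measurableSet_Ioi

lemma norm_Kint {z s : ℝ} (hs : 0 < s) (n : ℕ) (c : ℝ) (hzs : 0 < 1 + z * s) :
    ‖e (-s) * ((s ^ n * (1 + z * s) ^ c : ℝ) : ℂ)‖ = s ^ n * (1 + z * s) ^ c := by
  rw [norm_mul, norm_e, one_mul, Complex.norm_real, Real.norm_eq_abs,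
    abs_of_nonneg (by positivity)]

lemma integrable_K {z : ℝ} (hz : 0 < z) (n : ℕ) :
    IntegrableOn (fun s : ℝ => e (-s) * ((s ^ n * (1 + z * s) ^ (-(n:ℝ) - 3/2) : ℝ) : ℂ))
      (Set.Ioi 0) := by
  apply Integrable.mono' (integrable_core hz n) (meas_Kint hz n _)
  filter_upwards [ae_restrict_mem measurableSet_Ioi] with s (hs : 0 < s)
  exact le_of_eq (norm_Kint hs n _ (by positivity))

/-- `B n = ∫₀^∞ uⁿ (1+u)^{-n-3/2} du`. -/
noncomputable def B (n : ℕ) : ℝ := ∫ u in Set.Ioi (0:ℝ), u ^ n * (1 + u) ^ (-(n:ℝ) - 3/2)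

lemma core_integral_eq {z : ℝ} (hz : 0 < z) (n : ℕ) :
    ∫ s in Set.Ioi (0:ℝ), s ^ n * (1 + z * s) ^ (-(n:ℝ) - 3/2) = B n / z ^ (n+1) := by
  have h := MeasureTheory.integral_comp_mul_left_Ioi
    (fun u : ℝ => u ^ n * (1 + u) ^ (-(n:ℝ)-3/2)) 0 hz
  simp only [mul_zero, smul_eq_mul] at h
  have hcongr : ∀ s ∈ Set.Ioi (0:ℝ), s ^ n * (1 + z * s) ^ (-(n:ℝ)-3/2)
      = (z ^ n)⁻¹ * ((z*s) ^ n * (1 + z*s) ^ (-(n:ℝ)-3/2)) := by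
    intro s hs
    rw [mul_pow]
    field_simp
  rw [MeasureTheory.setIntegral_congr_fun measurableSet_Ioi hcongr,
    MeasureTheory.integral_const_mul, h, ← B]
  rw [pow_succ, eq_div_iff (by positivity)]
  field_simp

lemma K_bound {z : ℝ} (hz : 0 < z) (n : ℕ) : ‖K n z‖ ≤ B n / z ^ (n+1) := by
  rw [K]
  refine le_trans (MeasureTheory.norm_integral_le_integral_norm _) (le_of_eq ?_)
  rw [← core_integral_eq hz n]
  apply MeasureTheory.setIntegral_congr_fun measurableSet_Ioi
  intro s hs
  exact norm_Kint hs n _ (by have : (0:ℝ) < s := hs; positivity)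

lemma ball_pos {z x : ℝ} (hz : 0 < z) (hx : x ∈ Metric.ball z (z/2)) : z/2 < x := by
  rw [Metric.mem_ball, Real.dist_eq, abs_lt] at hx
  linarith [hx.1]

lemma hasDerivAt_K {z : ℝ} (hz : 0 < z) (n : ℕ) :
    HasDerivAt (K n) (((-(n:ℝ) - 3/2 : ℝ) : ℂ) * K (n+1) z) z := by
  set c : ℝ := -(n:ℝ) - 3/2 with hc
  have hc1 : c - 1 = -((n+1:ℕ):ℝ) - 3/2 := by push_cast [hc]; ring
  have hε : 0 < z/2 := by linarith
  have hz2 : 0 < z/2 := hε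
  have key := _root_.hasDerivAt_integral_of_dominated_loc_of_deriv_le
    (μ := volume.restrict (Set.Ioi (0:ℝ)))
    (F := fun (x : ℝ) (s : ℝ) => e (-s) * ((s ^ n * (1 + x * s) ^ c : ℝ) : ℂ))
    (F' := fun (x : ℝ) (s : ℝ) => e (-s) * ((s ^ n * (c * (1 + x * s) ^ (c-1) * s) : ℝ) : ℂ))
    (x₀ := z)
    (bound := fun s => ((n:ℝ) + 3/2) * (s ^ (n+1) * (1 + (z/2) * s) ^ (-((n+1:ℕ):ℝ) - 3/2)))
    (Metric.ball_mem_nhds z hε) ?_ ?_ ?_ ?_ ?_ ?_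
  · -- conclude
    have h2 := key.2
    have hval : (∫ s in Set.Ioi (0:ℝ), e (-s) * ((s ^ n * (c * (1 + z * s) ^ (c-1) * s) : ℝ) : ℂ))
        = ((c:ℝ):ℂ) * K (n+1) z := by
      rw [K, ← MeasureTheory.integral_const_mul]
      apply MeasureTheory.setIntegral_congr_fun measurableSet_Ioi
      intro s hs
      rw [hc1]
      push_cast
      ring
    rw [hval] at h2
    exact h2
  · -- measurability of F x near z
    filter_upwards [eventually_gt_nhds (by linarith : (0:ℝ) < z)] with x hx
    exact meas_Kint hx n c
  · exact integrable_K hz n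
  · -- measurability of F' z
    apply ContinuousOn.aestronglyMeasurable ?_ measurableSet_Ioi
    apply ContinuousOn.mono ?_ (Set.Ioi_subset_Ici (le_refl (0:ℝ)))
    apply ContinuousOn.mul ((e_cont.comp continuous_neg).continuousOn)
    apply Complex.continuous_ofReal.comp_continuousOn
    apply ContinuousOn.mul (by fun_prop)
    apply ContinuousOn.mul
    · apply ContinuousOn.mul continuousOn_const
      apply ContinuousOn.rpow_const (by fun_prop)
      intro s hs
      left
      have : (0:ℝ) ≤ s := hs
      positivity
    · exact continuousOn_id
  · -- bound
    filter_upwards [ae_restrict_mem measurableSet_Ioi] with s (hs : 0 < s)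
    intro x hx
    have hx2 : z/2 < x := ball_pos hz hx
    have hb1 : (0:ℝ) < 1 + (z/2) * s := by positivity
    have hb2 : (0:ℝ) < 1 + x * s := by nlinarith
    rw [norm_mul, norm_e, one_mul, Complex.norm_real, Real.norm_eq_abs]
    have h1 : |s ^ n * (c * (1 + x * s) ^ (c-1) * s)|
        = ((n:ℝ) + 3/2) * (s ^ (n+1) * (1 + x * s) ^ (c-1)) := by
      rw [abs_mul, abs_mul, abs_mul, abs_of_nonneg (by positivity : (0:ℝ) ≤ s ^ n),
        abs_of_nonneg (le_of_lt hs), abs_of_nonneg (Real.rpow_nonneg hb2.le _),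
        abs_of_nonpos (by rw [hc]; have h := (Nat.cast_nonneg n : (0:ℝ) ≤ n); linarith : c ≤ 0)]
      rw [hc]
      ring
    rw [h1]
    apply mul_le_mul_of_nonneg_left _ (by positivity)
    rw [pow_succ]
    apply mul_le_mul_of_nonneg_left _ (by positivity)
    rw [hc1]
    exact Real.rpow_le_rpow_of_nonpos hb1 (by nlinarith) (by have h := (Nat.cast_nonneg (n+1) : (0:ℝ) ≤ ((n+1:ℕ):ℝ)); linarith)
  · -- bound integrable
    exact (integrable_core hz2 (n+1)).const_mul _
  · -- differentiability
    filter_upwards [ae_restrict_mem measurableSet_Ioi] with s (hs : 0 < s)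
    intro x hx
    have hx2 : z/2 < x := ball_pos hz hx
    have hb2 : (0:ℝ) < 1 + x * s := by nlinarith
    have hder : HasDerivAt (fun y : ℝ => s ^ n * (1 + y * s) ^ c)
        (s ^ n * (c * (1 + x * s) ^ (c-1) * s)) x := by
      have h0 : HasDerivAt (fun y : ℝ => 1 + y * s) s x := by
        simpa using (hasDerivAt_mul_const s).const_add 1
      have h1 := (h0.rpow_const (p := c) (Or.inl hb2.ne')).const_mul (s ^ n)
      exact h1.congr_deriv (by ring)
    exact hder.ofReal_comp.const_mul (e (-s))

lemma diffOn_K (n : ℕ) : DifferentiableOn ℝ (K n) (Set.Ioi 0) :=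
  fun z hz => ((hasDerivAt_K hz n).differentiableAt).differentiableWithinAt

lemma contDiffOn_K (m : ℕ) : ∀ n : ℕ, ContDiffOn ℝ m (K n) (Set.Ioi 0) := by
  induction m with
  | zero =>
    intro n
    rw [Nat.cast_zero, contDiffOn_zero]
    exact fun z hz => ((hasDerivAt_K hz n).continuousAt).continuousWithinAt
  | succ m ih =>
    intro n
    rw [show ((m+1 : ℕ) : WithTop ℕ∞) = (m : WithTop ℕ∞) + 1 by norm_cast,
      contDiffOn_succ_iff_deriv_of_isOpen isOpen_Ioi]
    refine ⟨diffOn_K n, by simp, ?_⟩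
    apply ContDiffOn.congr (contDiffOn_const.mul (ih (n+1)))
    intro z hz
    exact (hasDerivAt_K hz n).deriv

lemma contDiffOn_K_top (n : ℕ) : ContDiffOn ℝ (⊤ : ℕ∞) (K n) (Set.Ioi 0) := by
  exact contDiffOn_infty.mpr (fun m => contDiffOn_K m n)

/-- The explicit formula for `E₂`. -/
noncomputable def Phi (z : ℝ) : ℂ :=
  Complex.I / (4 * Real.pi) * z - Complex.I / (8 * Real.pi) * z ^ 2 * K 0 z

lemma contDiffOn_Phi : ContDiffOn ℝ (⊤ : ℕ∞) Phi (Set.Ioi 0) := by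
  apply ContDiffOn.sub
  · exact (contDiff_const.mul Complex.ofRealCLM.contDiff).contDiffOn
  · exact ((contDiff_const.mul (Complex.ofRealCLM.contDiff.pow 2)).contDiffOn.mul
      (contDiffOn_K_top 0))

lemma e_zero : e 0 = 1 := by simp [e]

lemma tendsto_Phi {z : ℝ} (hz : 0 < z) :
    Tendsto (fun T : ℝ => ∫ t in (0:ℝ)..T, e (-(t / z)) * ((Real.sqrt (1 + t))⁻¹ : ℂ))
      atTop (nhds (-2 * Phi z)) := by
  have hπ : (0:ℝ) < Real.pi := Real.pi_pos
  set C : ℂ := (z : ℂ) * Complex.I / (2 * Real.pi) with hC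
  set u : ℝ → ℂ := fun t => (((1+t) ^ (-(1/2):ℝ) : ℝ) : ℂ) with hu
  set u' : ℝ → ℂ := fun t => (((-(1/2) * (1+t) ^ (-(3/2):ℝ)) : ℝ) : ℂ) with hu'
  set v : ℝ → ℂ := fun t => C * e (-(t/z)) with hv
  set v' : ℝ → ℂ := fun t => e (-(t/z)) with hv'
  -- derivative facts
  have hud : ∀ t : ℝ, 0 ≤ t → HasDerivAt u (u' t) t := by
    intro t ht
    have h1 : (0:ℝ) < 1 + t := by linarith
    have h0 : HasDerivAt (fun s : ℝ => 1 + s) 1 t := by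
      simpa using (hasDerivAt_id t).const_add 1
    have h2 := (h0.rpow_const (p := -(1/2)) (Or.inl h1.ne')).ofReal_comp
    convert h2 using 1
    rw [hu']
    push_cast
    rw [show -(1/2) - 1 = -(3/2 : ℝ) by norm_num]
    ring
  have hvd : ∀ t : ℝ, HasDerivAt v (v' t) t := by
    intro t
    have hg : HasDerivAt (fun s : ℝ => -(s/z)) (-(1/z)) t := by
      exact ((hasDerivAt_id t).div_const z).neg
    have h1 := (hg.ofReal_comp.const_mul ((2:ℂ) * Real.pi * Complex.I)).cexp
    have h2 : ∀ s : ℝ, e (-(s/z)) = Complex.exp ((2:ℂ) * Real.pi * Complex.I * ((-(s/z) : ℝ) : ℂ)) := by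
      intro s; rfl
    have h3 := h1.const_mul C
    have h4 : HasDerivAt v
        (C * (Complex.exp ((2:ℂ) * Real.pi * Complex.I * ((-(t/z) : ℝ) : ℂ)) *
          ((2:ℂ) * Real.pi * Complex.I * ((-(1/z) : ℝ) : ℂ)))) t := by
      apply h3.congr_of_eventuallyEq
      filter_upwards with s
      show C * e (-(s/z)) = _
      rw [h2 s]
    convert h4 using 1
    show e (-(t/z)) = _
    rw [h2 t, hC]
    have hz' : (z:ℂ) ≠ 0 := Complex.ofReal_ne_zero.mpr hz.ne'
    have hπ' : (Real.pi : ℂ) ≠ 0 := Complex.ofReal_ne_zero.mpr hπ.ne'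
    push_cast
    field_simp
    linear_combination Complex.I_mul_I
  -- the integrable tail
  have hint32 : IntegrableOn (fun t : ℝ => (1+t) ^ (-(3/2):ℝ)) (Set.Ioi 0) := by
    have := integrable_core one_pos 0
    simpa using this
  have htail_cont : ContinuousOn (fun t : ℝ => u' t * v t) (Set.Ici 0) := by
    apply ContinuousOn.mul
    · apply Complex.continuous_ofReal.comp_continuousOn
      apply ContinuousOn.mul continuousOn_const
      apply ContinuousOn.rpow_const (by fun_prop)
      intro t ht
      left
      have : (0:ℝ) ≤ t := ht
      positivity
    · exact (continuous_const.mul (e_cont.comp (by fun_prop))).continuousOn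
  have htail_int : IntegrableOn (fun t : ℝ => u' t * v t) (Set.Ioi 0) := by
    apply Integrable.mono' ((hint32.const_mul (‖C‖ * (1/2))))
    · exact (htail_cont.mono (Set.Ioi_subset_Ici le_rfl)).aestronglyMeasurable measurableSet_Ioi
    · filter_upwards [ae_restrict_mem measurableSet_Ioi] with t (ht : 0 < t)
      have h1 : (0:ℝ) < 1 + t := by linarith
      rw [norm_mul, hv, hu', norm_mul, norm_e, mul_one, Complex.norm_real, Real.norm_eq_abs,
        abs_mul, abs_of_nonneg (Real.rpow_nonneg h1.le _), abs_neg, abs_of_nonneg (by norm_num : (0:ℝ) ≤ (1/2:ℝ))]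
      ring_nf
      exact le_refl _
  have hu'cont : ContinuousOn u' (Set.Ici 0) := by
    apply Complex.continuous_ofReal.comp_continuousOn
    apply ContinuousOn.mul continuousOn_const
    apply ContinuousOn.rpow_const (by fun_prop)
    intro t ht
    left
    have : (0:ℝ) ≤ t := ht
    positivity
  -- change of variables
  have hJin : (∫ t in Set.Ioi (0:ℝ), e (-(t/z)) * (((1+t) ^ (-(3/2):ℝ) : ℝ):ℂ)) = (z:ℂ) * K 0 z := by
    have hcv := MeasureTheory.integral_comp_mul_left_Ioi
      (fun t : ℝ => e (-(t/z)) * (((1+t) ^ (-(3/2):ℝ) : ℝ):ℂ)) 0 hz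
    simp only [mul_zero] at hcv
    have hK : K 0 z = ∫ s in Set.Ioi (0:ℝ), e (-(z*s/z)) * (((1+z*s) ^ (-(3/2):ℝ) : ℝ):ℂ) := by
      rw [K]
      apply MeasureTheory.setIntegral_congr_fun measurableSet_Ioi
      intro s hs
      have hss : z * s / z = s := by field_simp
      beta_reduce
      rw [hss]
      norm_num
    rw [hK, hcv, Complex.real_smul]
    have hz' : (z:ℂ) ≠ 0 := Complex.ofReal_ne_zero.mpr hz.ne'
    push_cast
    field_simp
  have hA : Tendsto (fun T : ℝ => u T * v T) atTop (nhds 0) := by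
    have hbd : ∀ᶠ T in atTop, ‖u T * v T‖ ≤ (1+T) ^ (-(1/2):ℝ) * ‖C‖ := by
      filter_upwards [eventually_ge_atTop (0:ℝ)] with T hT
      show ‖(((1+T) ^ (-(1/2):ℝ) : ℝ):ℂ) * (C * e (-(T/z)))‖ ≤ (1+T) ^ (-(1/2):ℝ) * ‖C‖
      rw [norm_mul, norm_mul, norm_e, mul_one, Complex.norm_real, Real.norm_eq_abs,
        abs_of_nonneg (Real.rpow_nonneg (by linarith) _)]
    refine squeeze_zero_norm' hbd ?_
    have h1 : Tendsto (fun T : ℝ => 1 + T) atTop atTop :=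
      tendsto_atTop_add_const_left _ 1 tendsto_id
    have h2 := (tendsto_rpow_neg_atTop (by norm_num : (0:ℝ) < 1/2)).comp h1
    have h3 := h2.mul_const ‖C‖
    simpa [Function.comp] using h3
  have hB : Tendsto (fun T : ℝ => ∫ t in (0:ℝ)..T, u' t * v t) atTop
      (nhds (∫ t in Set.Ioi (0:ℝ), u' t * v t)) :=
    intervalIntegral_tendsto_integral_Ioi 0 htail_int tendsto_id
  have hRHS : Tendsto (fun T : ℝ => u T * v T - u 0 * v 0 - ∫ t in (0:ℝ)..T, u' t * v t)
      atTop (nhds (0 - u 0 * v 0 - ∫ t in Set.Ioi (0:ℝ), u' t * v t)) :=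
    (hA.sub tendsto_const_nhds).sub hB
  have hval : (0 : ℂ) - u 0 * v 0 - (∫ t in Set.Ioi (0:ℝ), u' t * v t) = -2 * Phi z := by
    have h5 : (∫ t in Set.Ioi (0:ℝ), u' t * v t)
        = ((-(1/2) : ℂ) * C) * ((z:ℂ) * K 0 z) := by
      rw [← hJin, ← MeasureTheory.integral_const_mul]
      apply MeasureTheory.setIntegral_congr_fun measurableSet_Ioi
      intro t ht
      show u' t * v t = _
      simp only [hu', hv]
      push_cast
      ring
    rw [h5]
    have hu0 : u 0 = 1 := by
      show (((1+(0:ℝ)) ^ (-(1/2):ℝ) : ℝ):ℂ) = 1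
      norm_num
    have hv0 : v 0 = C := by
      show C * e (-(0/z)) = C
      rw [show -(0/z) = (0:ℝ) by norm_num, e_zero, mul_one]
    rw [hu0, hv0, hC, Phi]
    have hπ' : (Real.pi : ℂ) ≠ 0 := Complex.ofReal_ne_zero.mpr hπ.ne'
    field_simp
    ring
  rw [← hval]
  apply Tendsto.congr' ?_ hRHS
  filter_upwards [eventually_ge_atTop (0:ℝ)] with T hT
  have huIcc : Set.uIcc (0:ℝ) T = Set.Icc 0 T := Set.uIcc_of_le hT
  have hparts : ∫ t in (0:ℝ)..T, u t * v' t
      = u T * v T - u 0 * v 0 - ∫ t in (0:ℝ)..T, u' t * v t := by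
    apply intervalIntegral.integral_mul_deriv_eq_deriv_mul
    · intro x hx
      rw [huIcc] at hx
      exact hud x hx.1
    · intro x _
      exact hvd x
    · apply ContinuousOn.intervalIntegrable
      rw [huIcc]
      exact hu'cont.mono (fun x hx => hx.1)
    · exact (e_cont.comp (by fun_prop)).intervalIntegrable _ _
  rw [← hparts]
  apply intervalIntegral.integral_congr
  intro t ht
  rw [huIcc] at ht
  have h1 : (0:ℝ) < 1 + t := by linarith [ht.1]
  show (((1+t) ^ (-(1/2):ℝ) : ℝ):ℂ) * (e (-(t/z))) = _
  rw [show ((1+t) ^ (-(1/2):ℝ)) = (Real.sqrt (1+t))⁻¹ from by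
    rw [Real.rpow_neg h1.le, Real.sqrt_eq_rpow]]
  push_cast
  ring

noncomputable def mu (k : ℕ) : ℂ := ((-(k:ℝ) - 3/2 : ℝ) : ℂ)

lemma iter_Phi (n : ℕ) : ∃ p q a b c : ℂ,
    (n ≠ 0 → p = 0) ∧ (n ≠ 1 → q = 0) ∧ (n = 0 → b = 0) ∧ (n ≤ 1 → c = 0) ∧
    ∀ z : ℝ, 0 < z → iteratedDerivWithin n Phi (Set.Ioi 0) z
      = p * z + q + a * z^2 * K n z + b * z * K (n-1) z + c * K (n-2) z := by
  induction n with
  | zero =>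
    refine ⟨Complex.I / (4*Real.pi), 0, -(Complex.I/(8*Real.pi)), 0, 0,
      fun h => absurd rfl h, fun _ => rfl, fun _ => rfl, fun _ => rfl, ?_⟩
    intro z hz
    rw [iteratedDerivWithin_zero, Phi]
    push_cast
    ring
  | succ n ih =>
    obtain ⟨p, q, a, b, c, hp, hq, hb, hc, hF⟩ := ih
    refine ⟨0, p, a * mu n, 2*a + b * mu (n-1), b + c * mu (n-2),
      fun _ => rfl, ?_, fun h => absurd h (Nat.succ_ne_zero n), ?_, ?_⟩
    · intro h
      exact hp (by omega)
    · intro h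
      have hn0 : n = 0 := by omega
      rw [hb hn0, hc (by omega)]
      ring
    · intro z hz
      rw [iteratedDerivWithin_succ]
      have heq : Set.EqOn (iteratedDerivWithin n Phi (Set.Ioi 0))
          (fun y : ℝ => p * y + q + a * y^2 * K n y + b * y * K (n-1) y + c * K (n-2) y)
          (Set.Ioi 0) := fun y hy => hF y hy
      rw [derivWithin_congr heq (hF z hz), derivWithin_of_isOpen isOpen_Ioi hz]
      have hid : HasDerivAt (fun y : ℝ => ((y : ℝ) : ℂ)) 1 z := (hasDerivAt_id z).ofReal_comp
      have hsq : HasDerivAt (fun y : ℝ => ((y : ℝ) : ℂ)^2) (2*(z:ℂ)) z := by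
        have hmm := hid.mul hid
        simp only [pow_two]
        exact hmm.congr_deriv (by ring)
      have hDK : ∀ m : ℕ, HasDerivAt (K m) (mu m * K (m+1) z) z := fun m => hasDerivAt_K hz m
      have h1 : HasDerivAt (fun y : ℝ => p * y + q) p z := by
        simpa using (hid.const_mul p).add_const q
      have h2 : HasDerivAt (fun y : ℝ => a * (y:ℂ)^2 * K n y)
          ((a * (2*(z:ℂ))) * K n z + (a * (z:ℂ)^2) * (mu n * K (n+1) z)) z := by
        exact (hsq.const_mul a).mul (hDK n)
      have h3 : HasDerivAt (fun y : ℝ => b * (y:ℂ) * K (n-1) y)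
          ((b * 1) * K (n-1) z + (b * (z:ℂ)) * (mu (n-1) * K (n-1+1) z)) z := by
        exact (hid.const_mul b).mul (hDK (n-1))
      have h4 : HasDerivAt (fun y : ℝ => c * K (n-2) y)
          (c * (mu (n-2) * K (n-2+1) z)) z := by
        simpa [mul_comm] using (hDK (n-2)).const_mul c
      have hder := ((h1.add h2).add h3).add h4
      rw [(show HasDerivAt (fun y : ℝ => p * y + q + a * (y:ℂ)^2 * K n y + b * y * K (n-1) y + c * K (n-2) y) _ z from hder).deriv]
      rcases Nat.lt_or_ge n 2 with hlt | hge
      · interval_cases n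
        · rw [hb rfl, hc (by omega)]
          norm_num
          ring
        · rw [hc (by omega)]
          norm_num
          ring
      · obtain ⟨m, rfl⟩ : ∃ m, n = m + 2 := ⟨n - 2, by omega⟩
        have e1 : m + 2 - 1 = m + 1 := by omega
        have e2 : m + 2 - 2 = m := by omega
        have e3 : m + 2 + 1 - 1 = m + 2 := by omega
        have e4 : m + 2 + 1 - 2 = m + 1 := by omega
        rw [e1, e2, e3, e4]
        ring

lemma B_nonneg (n : ℕ) : 0 ≤ B n := by
  apply MeasureTheory.setIntegral_nonneg measurableSet_Ioi
  intro u hu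
  have : (0:ℝ) < u := hu
  positivity

/-- If `E₂(z) = −(1/2)∫₀^∞ e(−t/z)(1+t)^{−1/2} dt` (improper Riemann
integral) for `z > 0`, then `E₂` is smooth on `(0,∞)` and for every `n ≥ 0` there is `C_n`
with `|E₂^{(n)}(z)| ≤ C_n z^{1−n}` for `0 < z ≤ 1`. -/
theorem E2_derivative_bounds
    (E₂ : ℝ → ℂ)
    (hE₂ : ∀ z : ℝ, 0 < z →
      Tendsto (fun T : ℝ => ∫ t in (0 : ℝ)..T, e (-(t / z)) * ((Real.sqrt (1 + t))⁻¹ : ℂ))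
        atTop (nhds (-2 * E₂ z))) :
    ContDiffOn ℝ (⊤ : ℕ∞) E₂ (Set.Ioi 0) ∧
    ∀ n : ℕ, ∃ C : ℝ, ∀ z : ℝ, 0 < z → z ≤ 1 →
      ‖iteratedDerivWithin n E₂ (Set.Ioi 0) z‖ ≤ C * z ^ ((1 : ℤ) - n) := by
  have hEq : ∀ z ∈ Set.Ioi (0:ℝ), E₂ z = Phi z := by
    intro z hz
    exact mul_left_cancel₀ (by norm_num : (-2:ℂ) ≠ 0)
      (tendsto_nhds_unique (hE₂ z hz) (tendsto_Phi hz))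
  constructor
  · exact contDiffOn_Phi.congr hEq
  · intro n
    obtain ⟨p, q, a, b, c, hp, hq, hb, hc, hF⟩ := iter_Phi n
    refine ⟨‖p‖ + ‖q‖ + ‖a‖ * B n + ‖b‖ * B (n-1) + ‖c‖ * B (n-2), ?_⟩
    intro z hz hz1
    have hmem : z ∈ Set.Ioi (0:ℝ) := hz
    have hiter : iteratedDerivWithin n E₂ (Set.Ioi 0) z
        = iteratedDerivWithin n Phi (Set.Ioi 0) z :=
      iteratedDerivWithin_congr hEq hmem
    rw [hiter, hF z hz]
    have hzn : (0:ℝ) < z ^ n := pow_pos hz n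
    have hw : z ^ ((1:ℤ) - n) = z / z ^ n := by
      rw [zpow_sub₀ hz.ne', zpow_one, zpow_natCast]
    rw [hw]
    have hwpos : (0:ℝ) < z / z ^ n := by positivity
    set X1 : ℂ := p * z with hX1
    set X2 : ℂ := q with hX2
    set X3 : ℂ := a * (z:ℂ)^2 * K n z with hX3
    set X4 : ℂ := b * (z:ℂ) * K (n-1) z with hX4
    set X5 : ℂ := c * K (n-2) z with hX5
    have hT1 : ‖X1‖ ≤ ‖p‖ * (z / z ^ n) := by
      rcases Nat.eq_zero_or_pos n with h0 | h0
      · subst h0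
        simp only [pow_zero, div_one, hX1]
        rw [norm_mul, Complex.norm_real, Real.norm_eq_abs, abs_of_pos hz]
      · rw [hX1, hp (by omega)]
        simp only [zero_mul, norm_zero]
        positivity
    have hT2 : ‖X2‖ ≤ ‖q‖ * (z / z ^ n) := by
      by_cases h1 : n = 1
      · subst h1
        rw [pow_one, div_self hz.ne', mul_one]
      · rw [← hX2, hq h1]
        simp only [norm_zero]
        positivity
    have hT3 : ‖X3‖ ≤ ‖a‖ * B n * (z / z ^ n) := by
      rw [hX3, norm_mul, norm_mul, norm_pow, Complex.norm_real, Real.norm_eq_abs,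
        abs_of_pos hz]
      refine le_trans (mul_le_mul_of_nonneg_left (K_bound hz n) (by positivity))
        (le_of_eq ?_)
      rw [pow_succ]
      field_simp
      ring
    have hT4 : ‖X4‖ ≤ ‖b‖ * B (n-1) * (z / z ^ n) := by
      rcases Nat.eq_zero_or_pos n with h0 | h0
      · rw [hX4, hb h0]
        simp only [zero_mul, norm_zero]
        positivity
      · have hn : n - 1 + 1 = n := by omega
        rw [hX4, norm_mul, norm_mul, Complex.norm_real, Real.norm_eq_abs, abs_of_pos hz]
        refine le_trans (mul_le_mul_of_nonneg_left (K_bound hz (n-1)) (by positivity))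
          (le_of_eq ?_)
        rw [hn]
        field_simp
    have hT5 : ‖X5‖ ≤ ‖c‖ * B (n-2) * (z / z ^ n) := by
      rcases Nat.lt_or_ge n 2 with h0 | h0
      · rw [hX5, hc (by omega)]
        simp only [zero_mul, norm_zero]
        positivity
      · have hzz : z ^ (n-1) * z = z ^ n := by
          rw [← pow_succ]
          congr 1
          omega
        have hq' : z / z ^ n = 1 / z ^ (n-1) := by
          rw [← hzz]
          have hzn1 : (0:ℝ) < z ^ (n-1) := pow_pos hz _
          field_simp
        rw [hX5, norm_mul, hq']
        refine le_trans (mul_le_mul_of_nonneg_left (K_bound hz (n-2)) (by positivity))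
          (le_of_eq ?_)
        rw [show n - 2 + 1 = n - 1 from by omega]
        ring
    have hs1 : ‖X1 + X2 + X3 + X4 + X5‖ ≤ ‖X1‖ + ‖X2‖ + ‖X3‖ + ‖X4‖ + ‖X5‖ := by
      calc ‖X1 + X2 + X3 + X4 + X5‖ ≤ ‖X1 + X2 + X3 + X4‖ + ‖X5‖ := norm_add_le _ _
        _ ≤ ‖X1 + X2 + X3‖ + ‖X4‖ + ‖X5‖ := by linarith [norm_add_le (X1 + X2 + X3) X4]
        _ ≤ ‖X1 + X2‖ + ‖X3‖ + ‖X4‖ + ‖X5‖ := by linarith [norm_add_le (X1 + X2) X3]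
        _ ≤ ‖X1‖ + ‖X2‖ + ‖X3‖ + ‖X4‖ + ‖X5‖ := by linarith [norm_add_le X1 X2]
    have hfinal : (‖p‖ + ‖q‖ + ‖a‖ * B n + ‖b‖ * B (n-1) + ‖c‖ * B (n-2)) * (z / z ^ n)
        = ‖p‖ * (z / z ^ n) + ‖q‖ * (z / z ^ n) + ‖a‖ * B n * (z / z ^ n)
          + ‖b‖ * B (n-1) * (z / z ^ n) + ‖c‖ * B (n-2) * (z / z ^ n) := by ring
    rw [hfinal]
    linarith
end

section
/- Let J be an invertible real 2×2 matrix and define W_± := { N ∈ M₂(ℝ) : ‖N J^{−1}‖² ± 2·det(N J^{−1}) = 0 }. Then W_+ and W_− are linear subspaces of M₂(ℝ), each of dimension 2, and M₂(ℝ) = W_+ ⊕ W_− (i.e. W_+ ∩ W_− = {0} and W_+ + W_− = M₂(ℝ)). -/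
open Matrix

/-- The square of the Frobenius norm: `‖A‖² = tr(A Aᵀ)`. -/
noncomputable def frobSq (A : Matrix (Fin 2) (Fin 2) ℝ) : ℝ := (A * Aᵀ).trace

private lemma frobSq_entries (M : Matrix (Fin 2) (Fin 2) ℝ) :
    frobSq M = M 0 0 ^ 2 + M 0 1 ^ 2 + M 1 0 ^ 2 + M 1 1 ^ 2 := by
  simp [frobSq, Matrix.trace_fin_two, Matrix.mul_apply, Fin.sum_univ_two]
  ring

/-- For invertible `J`, the sets
`W_± = {N : ‖NJ⁻¹‖² ± 2 det(NJ⁻¹) = 0}` are 2-dimensional linear subspaces of `M₂(ℝ)` with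
`M₂(ℝ) = W₊ ⊕ W₋`. -/
theorem null_spaces_direct_sum
    (J : Matrix (Fin 2) (Fin 2) ℝ) (hJ : IsUnit J.det) :
    ∃ Wp Wm : Submodule ℝ (Matrix (Fin 2) (Fin 2) ℝ),
      (Wp : Set (Matrix (Fin 2) (Fin 2) ℝ))
          = {N | frobSq (N * J⁻¹) + 2 * (N * J⁻¹).det = 0} ∧
      (Wm : Set (Matrix (Fin 2) (Fin 2) ℝ))
          = {N | frobSq (N * J⁻¹) - 2 * (N * J⁻¹).det = 0} ∧
      Module.finrank ℝ Wp = 2 ∧ Module.finrank ℝ Wm = 2 ∧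
      Wp ⊓ Wm = ⊥ ∧ Wp ⊔ Wm = ⊤ := by
  have hJJ : J * J⁻¹ = 1 := Matrix.mul_nonsing_inv J hJ
  have hJJ' : J⁻¹ * J = 1 := Matrix.nonsing_inv_mul J hJ
  let e : Matrix (Fin 2) (Fin 2) ℝ ≃ₗ[ℝ] Matrix (Fin 2) (Fin 2) ℝ :=
    LinearEquiv.ofLinear (LinearMap.mulRight ℝ J) (LinearMap.mulRight ℝ J⁻¹)
      (LinearMap.ext fun x => by
        simp [LinearMap.mulRight_apply, mul_assoc, hJJ'])
      (LinearMap.ext fun x => by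
        simp [LinearMap.mulRight_apply, mul_assoc, hJJ])
  have hes : ∀ x : Matrix (Fin 2) (Fin 2) ℝ, e.symm x = x * J⁻¹ := fun x => rfl
  let vp : Fin 2 → Matrix (Fin 2) (Fin 2) ℝ := ![!![1,0;0,-1], !![0,1;1,0]]
  let vm : Fin 2 → Matrix (Fin 2) (Fin 2) ℝ := ![!![1,0;0,1], !![0,1;-1,0]]
  let Sp : Submodule ℝ (Matrix (Fin 2) (Fin 2) ℝ) := Submodule.span ℝ (Set.range vp)
  let Sm : Submodule ℝ (Matrix (Fin 2) (Fin 2) ℝ) := Submodule.span ℝ (Set.range vm)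
  have hmemp : ∀ M : Matrix (Fin 2) (Fin 2) ℝ,
      M ∈ Sp ↔ (M 0 0 + M 1 1 = 0 ∧ M 0 1 = M 1 0) := by
    intro M
    rw [show Sp = Submodule.span ℝ (Set.range vp) from rfl,
      Submodule.mem_span_range_iff_exists_fun]
    constructor
    · rintro ⟨c, rfl⟩
      constructor <;> simp [vp, Fin.sum_univ_two]
    · rintro ⟨h1, h2⟩
      refine ⟨![M 0 0, M 0 1], ?_⟩
      ext i j
      fin_cases i <;> fin_cases j <;>
        simp [vp, Fin.sum_univ_two] <;> linarith
  have hmemm : ∀ M : Matrix (Fin 2) (Fin 2) ℝ,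
      M ∈ Sm ↔ (M 0 0 = M 1 1 ∧ M 0 1 + M 1 0 = 0) := by
    intro M
    rw [show Sm = Submodule.span ℝ (Set.range vm) from rfl,
      Submodule.mem_span_range_iff_exists_fun]
    constructor
    · rintro ⟨c, rfl⟩
      constructor <;> simp [vm, Fin.sum_univ_two]
    · rintro ⟨h1, h2⟩
      refine ⟨![M 0 0, M 0 1], ?_⟩
      ext i j
      fin_cases i <;> fin_cases j <;>
        simp [vm, Fin.sum_univ_two] <;> linarith
  refine ⟨Sp.map (e : _ →ₗ[ℝ] _), Sm.map (e : _ →ₗ[ℝ] _), ?_, ?_, ?_, ?_, ?_, ?_⟩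
  · ext N
    rw [SetLike.mem_coe, Submodule.mem_map_equiv, hes, hmemp, Set.mem_setOf_eq,
      frobSq_entries, Matrix.det_fin_two]
    set M := N * J⁻¹ with hM
    constructor
    · rintro ⟨h1, h2⟩
      linear_combination (M 0 0 + M 1 1) * h1 + (M 0 1 - M 1 0) * h2
    · intro h
      have key : (M 0 0 + M 1 1) ^ 2 + (M 0 1 - M 1 0) ^ 2 = 0 := by linear_combination h
      have k1 : (M 0 0 + M 1 1) ^ 2 = 0 := by nlinarith [sq_nonneg (M 0 1 - M 1 0)]
      have k2 : (M 0 1 - M 1 0) ^ 2 = 0 := by nlinarith [sq_nonneg (M 0 0 + M 1 1)]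
      constructor
      · exact sq_eq_zero_iff.mp k1
      · have := sq_eq_zero_iff.mp k2; linarith
  · ext N
    rw [SetLike.mem_coe, Submodule.mem_map_equiv, hes, hmemm, Set.mem_setOf_eq,
      frobSq_entries, Matrix.det_fin_two]
    set M := N * J⁻¹ with hM
    constructor
    · rintro ⟨h1, h2⟩
      linear_combination (M 0 0 - M 1 1) * h1 + (M 0 1 + M 1 0) * h2
    · intro h
      have key : (M 0 0 - M 1 1) ^ 2 + (M 0 1 + M 1 0) ^ 2 = 0 := by linear_combination h
      have k1 : (M 0 0 - M 1 1) ^ 2 = 0 := by nlinarith [sq_nonneg (M 0 1 + M 1 0)]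
      have k2 : (M 0 1 + M 1 0) ^ 2 = 0 := by nlinarith [sq_nonneg (M 0 0 - M 1 1)]
      constructor
      · have := sq_eq_zero_iff.mp k1; linarith
      · exact sq_eq_zero_iff.mp k2
  · rw [LinearEquiv.finrank_map_eq]
    refine finrank_span_eq_card ?_
    rw [LinearIndependent.pair_iff]
    intro s t h
    have h0 := congrFun (congrFun h 0) 0
    have h1 := congrFun (congrFun h 0) 1
    simp at h0 h1
    exact ⟨h0, h1⟩
  · rw [LinearEquiv.finrank_map_eq]
    refine finrank_span_eq_card ?_
    rw [LinearIndependent.pair_iff]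
    intro s t h
    have h0 := congrFun (congrFun h 0) 0
    have h1 := congrFun (congrFun h 0) 1
    simp at h0 h1
    exact ⟨h0, h1⟩
  · rw [← Submodule.map_inf (e : Matrix (Fin 2) (Fin 2) ℝ →ₗ[ℝ] Matrix (Fin 2) (Fin 2) ℝ) e.injective]
    suffices h : Sp ⊓ Sm = ⊥ by rw [h, Submodule.map_bot]
    rw [eq_bot_iff]
    intro M hMm
    have hp := (hmemp M).mp hMm.1
    have hm := (hmemm M).mp hMm.2
    obtain ⟨h1, h2⟩ := hp
    obtain ⟨h3, h4⟩ := hm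
    simp only [Submodule.mem_bot]
    ext i j
    fin_cases i <;> fin_cases j <;> simp <;> linarith
  · rw [← Submodule.map_sup]
    suffices h : Sp ⊔ Sm = ⊤ by
      rw [h, Submodule.map_top, LinearMap.range_eq_top]
      exact e.surjective
    rw [eq_top_iff]
    intro M _
    rw [Submodule.mem_sup]
    refine ⟨!![(M 0 0 - M 1 1)/2, (M 0 1 + M 1 0)/2; (M 0 1 + M 1 0)/2, -((M 0 0 - M 1 1)/2)],
      ?_, !![(M 0 0 + M 1 1)/2, (M 0 1 - M 1 0)/2; -((M 0 1 - M 1 0)/2), (M 0 0 + M 1 1)/2],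
      ?_, ?_⟩
    · rw [hmemp]; constructor <;> simp
    · rw [hmemm]; constructor <;> simp
    · ext i j
      fin_cases i <;> fin_cases j <;> simp <;> ring
end
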